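/- arXiv:2407.15368 — 11 statements merged into one kernel-verified Lean document; each statement's English description precedes it below -/
import Mathlib

section
/- Let (Ω, 𝔉, P) be a probability space, X ⊆ ℝⁿ a convex set, c > 0, and F : X × Ω → ℝ such that for P-almost every ω the map x ↦ F(x, ω) is convex on X, and F(x, ·) is square-integrable for every x ∈ X. Then the function φ(x, y, z) := (c/z)·E[(F(x, ·) − y)₊²] + y + (c/4)·z is jointly convex on X × ℝ × (0, ∞). -/
open MeasureTheory

/-- Scalar key inequality: joint convexity of `u ↦ c·u₊²/z`. -/
lemma aux_persp (a b u1 u2 z1 z2 c u : ℝ) (ha : 0 ≤ a) (hb : 0 ≤ b) (hab : a + b = 1)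
    (hz1 : 0 < z1) (hz2 : 0 < z2) (hc : 0 < c) (hz : 0 < a * z1 + b * z2)
    (hu0 : 0 ≤ u) (hu : u ≤ a * u1 + b * u2) (h1 : 0 ≤ u1) (h2 : 0 ≤ u2) :
    c / (a * z1 + b * z2) * u ^ 2 ≤ a * (c / z1 * u1 ^ 2) + b * (c / z2 * u2 ^ 2) := by
  have H : (a * u1 + b * u2) ^ 2 * (z1 * z2) ≤
      (a * (u1 ^ 2 * z2) + b * (u2 ^ 2 * z1)) * (a * z1 + b * z2) := by
    nlinarith [mul_nonneg (mul_nonneg ha hb) (sq_nonneg (u1 * z2 - u2 * z1))]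
  have hu2 : u ^ 2 ≤ (a * u1 + b * u2) ^ 2 := pow_le_pow_left₀ hu0 hu 2
  have expand : a * (c / z1 * u1 ^ 2) + b * (c / z2 * u2 ^ 2)
      = c * (a * (u1 ^ 2 * z2) + b * (u2 ^ 2 * z1)) / (z1 * z2) := by
    field_simp
  rw [div_mul_eq_mul_div, div_le_iff₀ hz, expand, div_mul_eq_mul_div,
    le_div_iff₀ (mul_pos hz1 hz2)]
  nlinarith [mul_le_mul_of_nonneg_left H hc.le,
    mul_le_mul_of_nonneg_left (mul_le_mul_of_nonneg_right hu2 (mul_pos hz1 hz2).le) hc.le]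

/-- Joint convexity of the lifted objective
`φ(x, y, z) = (c/z)·E[(F(x,·) − y)₊²] + y + (c/4)·z` on `X × ℝ × (0, ∞)`. -/
theorem stmt_2 {n : ℕ} {Ω : Type*} [MeasurableSpace Ω] (P : Measure Ω) [IsProbabilityMeasure P]
    (X : Set (Fin n → ℝ)) (hX : Convex ℝ X) (c : ℝ) (hc : 0 < c)
    (F : (Fin n → ℝ) → Ω → ℝ)
    (hconv : ∀ᵐ ω ∂P, ConvexOn ℝ X (fun x => F x ω))
    (hL2 : ∀ x ∈ X, MemLp (F x) 2 P) :
    ConvexOn ℝ (X ×ˢ (Set.univ : Set ℝ) ×ˢ Set.Ioi (0 : ℝ))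
      (fun p : (Fin n → ℝ) × ℝ × ℝ =>
        (c / p.2.2) * (∫ ω, (max (F p.1 ω - p.2.1) 0) ^ 2 ∂P) + p.2.1 + (c / 4) * p.2.2) := by
  -- integrability of the positive-part squares
  have key : ∀ x ∈ X, ∀ y : ℝ, Integrable (fun ω => (max (F x ω - y) 0) ^ 2) P := by
    intro x hx y
    have h1 : MemLp (fun ω => F x ω - y) 2 P := (hL2 x hx).sub (memLp_const y)
    have h2 : Integrable (fun ω => (F x ω - y) ^ 2) P := h1.integrable_sq
    refine h2.mono ?_ ?_
    · exact ((h1.aestronglyMeasurable.aemeasurable.max aemeasurable_const).pow_const 2).aestronglyMeasurable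
    · filter_upwards with ω
      rw [Real.norm_eq_abs, Real.norm_eq_abs, abs_of_nonneg (by positivity),
        abs_of_nonneg (sq_nonneg _)]
      rcases le_total (F x ω - y) 0 with h | h
      · rw [max_eq_right h]; simpa using sq_nonneg (F x ω - y)
      · rw [max_eq_left h]
  refine ⟨hX.prod (convex_univ.prod (convex_Ioi 0)), ?_⟩
  rintro ⟨x1, y1, z1⟩ ⟨hx1, -, hz1⟩ ⟨x2, y2, z2⟩ ⟨hx2, -, hz2⟩ a b ha hb hab
  simp only [Set.mem_Ioi] at hz1 hz2
  simp only [Prod.smul_mk, Prod.mk_add_mk, smul_eq_mul]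
  have hz : 0 < a * z1 + b * z2 := by
    rcases ha.eq_or_lt with h | h
    · have hb1 : b = 1 := by linarith
      simp [← h, hb1]; exact hz2
    · nlinarith [mul_nonneg hb hz2.le]
  have hxm : a • x1 + b • x2 ∈ X := hX hx1 hx2 ha hb hab
  set f0 : Ω → ℝ := fun ω => (max (F (a • x1 + b • x2) ω - (a * y1 + b * y2)) 0) ^ 2 with hf0
  set f1 : Ω → ℝ := fun ω => (max (F x1 ω - y1) 0) ^ 2 with hf1
  set f2 : Ω → ℝ := fun ω => (max (F x2 ω - y2) 0) ^ 2 with hf2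
  have hi0 : Integrable f0 P := key _ hxm _
  have hi1 : Integrable f1 P := key _ hx1 _
  have hi2 : Integrable f2 P := key _ hx2 _
  have hpt : ∀ᵐ ω ∂P, c / (a * z1 + b * z2) * f0 ω
      ≤ a * (c / z1 * f1 ω) + b * (c / z2 * f2 ω) := by
    filter_upwards [hconv] with ω hω
    set u1 := max (F x1 ω - y1) 0
    set u2 := max (F x2 ω - y2) 0
    have hF : F (a • x1 + b • x2) ω ≤ a * F x1 ω + b * F x2 ω := by
      have := hω.2 hx1 hx2 ha hb hab
      simpa [smul_eq_mul] using this
    have hu : max (F (a • x1 + b • x2) ω - (a * y1 + b * y2)) 0 ≤ a * u1 + b * u2 := by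
      refine max_le ?_ (by positivity)
      have h1 : F x1 ω - y1 ≤ u1 := le_max_left _ _
      have h2 : F x2 ω - y2 ≤ u2 := le_max_left _ _
      nlinarith [mul_le_mul_of_nonneg_left h1 ha, mul_le_mul_of_nonneg_left h2 hb]
    exact aux_persp a b u1 u2 z1 z2 c _ ha hb hab hz1 hz2 hc hz (le_max_right _ _) hu
      (le_max_right _ _) (le_max_right _ _)
  have hIL : Integrable (fun ω => c / (a * z1 + b * z2) * f0 ω) P := hi0.const_mul _
  have hIR : Integrable (fun ω => a * (c / z1 * f1 ω) + b * (c / z2 * f2 ω)) P :=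
    ((hi1.const_mul _).const_mul _).add ((hi2.const_mul _).const_mul _)
  have hmono := integral_mono_ae hIL hIR hpt
  rw [integral_const_mul, integral_add ((hi1.const_mul _).const_mul _)
    ((hi2.const_mul _).const_mul _), integral_const_mul, integral_const_mul,
    integral_const_mul, integral_const_mul] at hmono
  have hmain : c / (a * z1 + b * z2) * ∫ ω, f0 ω ∂P
      ≤ a * (c / z1 * ∫ ω, f1 ω ∂P) + b * (c / z2 * ∫ ω, f2 ω ∂P) := hmono
  have hring : a * (c / 4) * z1 + b * (c / 4) * z2 = c / 4 * (a * z1 + b * z2) := by ring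
  nlinarith [hmain]
end

section
/- Define ψ : ℝ → ℝ by ψ(x) := (8 + 2x²) + (1/2)·(16 − (8 + 2x²))² + 1/4. Then ψ(x) = 2x⁴ − 14x² + 161/4 for all x, and ψ is not convex on the interval [−1, 1] (indeed ψ''(x) = 24x² − 28 < 0 for all x ∈ [−1, 1]). -/
lemma feq : (fun x : ℝ => (8 + 2 * x ^ 2) + (1 / 2) * (16 - (8 + 2 * x ^ 2)) ^ 2 + 1 / 4)
    = fun x : ℝ => 2 * x ^ 4 - 14 * x ^ 2 + 161 / 4 := by
  funext x; ring

lemma d1 : deriv (fun x : ℝ => 2 * x ^ 4 - 14 * x ^ 2 + 161 / 4)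
    = fun x : ℝ => 8 * x ^ 3 - 28 * x := by
  funext x
  have h : HasDerivAt (fun x : ℝ => 2 * x ^ 4 - 14 * x ^ 2 + 161 / 4)
      (8 * x ^ 3 - 28 * x) x := by
    have := (((hasDerivAt_pow 4 x).const_mul 2).sub ((hasDerivAt_pow 2 x).const_mul 14)).add_const (161/4)
    exact this.congr_deriv (by push_cast; ring)
  exact h.deriv

lemma d2 (x : ℝ) : deriv (fun x : ℝ => 8 * x ^ 3 - 28 * x) x = 24 * x ^ 2 - 28 := by
  have h : HasDerivAt (fun x : ℝ => 8 * x ^ 3 - 28 * x) (24 * x ^ 2 - 28) x := by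
    have := ((hasDerivAt_pow 3 x).const_mul 8).sub ((hasDerivAt_id x).const_mul 28)
    exact this.congr_deriv (by push_cast; ring)
  exact h.deriv

/-- The lifted objective of the counterexample instance:
`ψ(x) = (8 + 2x²) + (1/2)(16 − (8 + 2x²))² + 1/4` equals `2x⁴ − 14x² + 161/4`, is not
convex on `[−1, 1]`, and its second derivative is `24x² − 28 < 0` on `[−1, 1]`. -/
theorem stmt_4 :
    (∀ x : ℝ, (8 + 2 * x ^ 2) + (1 / 2) * (16 - (8 + 2 * x ^ 2)) ^ 2 + 1 / 4
        = 2 * x ^ 4 - 14 * x ^ 2 + 161 / 4) ∧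
    ¬ ConvexOn ℝ (Set.Icc (-1 : ℝ) 1)
        (fun x : ℝ => (8 + 2 * x ^ 2) + (1 / 2) * (16 - (8 + 2 * x ^ 2)) ^ 2 + 1 / 4) ∧
    (∀ x ∈ Set.Icc (-1 : ℝ) 1,
      deriv (deriv (fun x : ℝ =>
          (8 + 2 * x ^ 2) + (1 / 2) * (16 - (8 + 2 * x ^ 2)) ^ 2 + 1 / 4)) x
        = 24 * x ^ 2 - 28 ∧ 24 * x ^ 2 - 28 < 0) := by
  refine ⟨fun x => by ring, ?_, ?_⟩
  · intro h
    have h1 : (-1 : ℝ) ∈ Set.Icc (-1 : ℝ) 1 := by norm_num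
    have h2 : (1 : ℝ) ∈ Set.Icc (-1 : ℝ) 1 := by norm_num
    have := h.2 h1 h2 (by norm_num : (0:ℝ) ≤ 1/2) (by norm_num : (0:ℝ) ≤ 1/2) (by norm_num)
    norm_num at this
  · intro x hx
    rw [feq, d1, d2]
    refine ⟨rfl, ?_⟩
    obtain ⟨hl, hr⟩ := hx
    nlinarith [sq_nonneg x]
end

section
/- Let (Ω, 𝔉, P) be a probability space, U : Ω → ℝ a square-integrable random variable, and c ∈ (0, 1]. Define φ(y, z) := (c/z)·E[(U − y)₊²] + y + (c/4)·z for y ∈ ℝ, z > 0. Then: (i) for every y ∈ ℝ, inf_{z > 0} φ(y, z) = y + c·(E[(U − y)₊²])^{1/2}, and if E[(U − y)₊²] > 0 this infimum is attained at z = 2·(E[(U − y)₊²])^{1/2}; (ii) inf over {(y, z) : y ≥ E[U], z > 0} of φ(y, z) equals E[U] + c·(E[(U − E[U])₊²])^{1/2}, and the infimum over y is attained at y = E[U]. -/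
open MeasureTheory

/-- Properties of the lifted objective `φ(y, z) = (c/z)·E[(U − y)₊²] + y + (c/4)·z`:
(i) for every `y`, `inf_{z>0} φ(y, z) = y + c·√(E[(U − y)₊²])`, attained at
`z = 2·√(E[(U − y)₊²])` whenever `E[(U − y)₊²] > 0`;
(ii) the infimum of `φ` over `{(y, z) : y ≥ E[U], z > 0}` equals
`E[U] + c·√(E[(U − E[U])₊²])`, the infimum over `y` being attained at `y = E[U]`. -/
theorem stmt_5 {Ω : Type*} [MeasurableSpace Ω] (P : Measure Ω) [IsProbabilityMeasure P]
    (U : Ω → ℝ) (hU : MemLp U 2 P) (c : ℝ) (hc : c ∈ Set.Ioc (0 : ℝ) 1)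
    (g : ℝ → ℝ) (hg : ∀ y, g y = ∫ ω, (max (U ω - y) 0) ^ 2 ∂P)
    (φ : ℝ → ℝ → ℝ) (hφ : ∀ y z, φ y z = (c / z) * g y + y + (c / 4) * z) :
    (∀ y : ℝ,
      IsGLB {v : ℝ | ∃ z > (0 : ℝ), v = φ y z} (y + c * Real.sqrt (g y)) ∧
      (0 < g y →
        0 < 2 * Real.sqrt (g y) ∧
        φ y (2 * Real.sqrt (g y)) = y + c * Real.sqrt (g y))) ∧
    IsGLB {v : ℝ | ∃ y z : ℝ, (∫ ω, U ω ∂P) ≤ y ∧ 0 < z ∧ v = φ y z}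
      ((∫ ω, U ω ∂P) + c * Real.sqrt (g (∫ ω, U ω ∂P))) ∧
    IsGLB {v : ℝ | ∃ z > (0 : ℝ), v = φ (∫ ω, U ω ∂P) z}
      ((∫ ω, U ω ∂P) + c * Real.sqrt (g (∫ ω, U ω ∂P))) := by
  obtain ⟨hc0, hc1⟩ := hc
  set m := ∫ ω, U ω ∂P with hm
  have hfmem : ∀ y : ℝ, MemLp (fun ω => max (U ω - y) 0) 2 P := fun y =>
    (hU.sub (memLp_const y)).pos_part
  have hgnn : ∀ y, 0 ≤ g y := fun y => by
    rw [hg]; exact integral_nonneg fun ω => sq_nonneg _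
  -- AM-GM lower bound
  have hlow : ∀ y z, 0 < z → y + c * Real.sqrt (g y) ≤ φ y z := by
    intro y z hz
    rw [hφ]
    have h1 : Real.sqrt (g y) ^ 2 = g y := Real.sq_sqrt (hgnn y)
    have h2 : Real.sqrt (g y) ≤ g y / z + z / 4 := by
      rw [div_add_div _ _ (ne_of_gt hz) (by norm_num), le_div_iff₀ (by positivity)]
      nlinarith [sq_nonneg (Real.sqrt (g y) - z / 2)]
    have h3 : c * Real.sqrt (g y) ≤ c * (g y / z + z / 4) :=
      mul_le_mul_of_nonneg_left h2 hc0.le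
    have h4 : c * (g y / z + z / 4) = (c / z) * g y + (c / 4) * z := by
      field_simp
    linarith [h4 ▸ h3]
  -- attainment
  have hatt : ∀ y, 0 < g y → φ y (2 * Real.sqrt (g y)) = y + c * Real.sqrt (g y) := by
    intro y hgy
    have hs : 0 < Real.sqrt (g y) := Real.sqrt_pos.2 hgy
    have h1 : Real.sqrt (g y) ^ 2 = g y := Real.sq_sqrt (hgnn y)
    rw [hφ]
    field_simp
    nlinarith [h1]
  -- GLB for a fixed y
  have glbfix : ∀ y, IsGLB {v : ℝ | ∃ z > (0 : ℝ), v = φ y z} (y + c * Real.sqrt (g y)) := by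
    intro y
    constructor
    · rintro v ⟨z, hz, rfl⟩; exact hlow y z hz
    · intro b hb
      rcases (hgnn y).lt_or_eq with hgy | hgy
      · have hmem : y + c * Real.sqrt (g y) ∈ {v : ℝ | ∃ z > (0 : ℝ), v = φ y z} :=
          ⟨2 * Real.sqrt (g y), by positivity, (hatt y hgy).symm⟩
        exact hb hmem
      · have hsy : Real.sqrt (g y) = 0 := by rw [← hgy, Real.sqrt_zero]
        rw [hsy, mul_zero, add_zero]
        apply le_of_forall_pos_le_add
        intro ε hε
        have hz : (0:ℝ) < 4 * ε / c := by positivity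
        have hval : φ y (4 * ε / c) = y + ε := by
          rw [hφ, ← hgy]; field_simp; ring
        have := hb ⟨4 * ε / c, hz, hval.symm⟩
        linarith
  -- monotonicity of y ↦ y + c √(g y)
  have mono : ∀ y, m ≤ y → m + c * Real.sqrt (g m) ≤ y + c * Real.sqrt (g y) := by
    intro y hy
    set a := y - m with ha
    have ha0 : 0 ≤ a := sub_nonneg.2 hy
    have key : Real.sqrt (g m) ≤ Real.sqrt (g y) + a := by
      set f := fun ω => max (U ω - y) 0 with hf
      have hf2 : MemLp f 2 P := hfmem y
      have hfint : Integrable f P := hf2.integrable (by norm_num)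
      have hfsq : Integrable (fun ω => f ω ^ 2) P := hf2.integrable_sq
      have hfnn : 0 ≤ ∫ ω, f ω ∂P := integral_nonneg fun ω => le_max_right _ _
      have hmean : (∫ ω, f ω ∂P) ^ 2 ≤ ∫ ω, f ω ^ 2 ∂P := by
        have hv := ProbabilityTheory.variance_nonneg f P
        rw [ProbabilityTheory.variance_eq_sub hf2] at hv
        simp only [Pi.pow_apply] at hv
        linarith
      have h1 : g m ≤ ∫ ω, (f ω + a) ^ 2 ∂P := by
        rw [hg]
        apply integral_mono ((hfmem m).integrable_sq)
          ((hf2.add (memLp_const a)).integrable_sq)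
        intro ω
        have h : max (U ω - m) 0 ≤ f ω + a := by
          apply max_le
          · have : U ω - m = (U ω - y) + a := by rw [ha]; ring
            rw [this]
            exact add_le_add_left (le_max_left _ _) a
          · exact add_nonneg (le_max_right _ _) ha0
        exact pow_le_pow_left₀ (le_max_right _ _) h 2
      have h2 : ∫ ω, (f ω + a) ^ 2 ∂P
          = (∫ ω, f ω ^ 2 ∂P) + 2 * a * (∫ ω, f ω ∂P) + a ^ 2 := by
        have he : ∀ ω, (f ω + a) ^ 2 = f ω ^ 2 + (2 * a) * f ω + a ^ 2 := fun ω => by ring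
        simp_rw [he]
        have i1 : Integrable (fun ω => f ω ^ 2 + 2 * a * f ω) P :=
          hfsq.add (hfint.const_mul (2 * a))
        rw [integral_add i1 (integrable_const _),
          integral_add hfsq (hfint.const_mul (2 * a)), MeasureTheory.integral_const_mul, integral_const]
        simp [measure_univ]
      have hgy2 : Real.sqrt (g y) ^ 2 = g y := Real.sq_sqrt (hgnn y)
      have hEf : ∫ ω, f ω ∂P ≤ Real.sqrt (g y) := by
        have h5 : (∫ ω, f ω ∂P) ^ 2 ≤ g y := by rw [hg]; exact hmean
        nlinarith [Real.sqrt_nonneg (g y)]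
      have h3 : g m ≤ (Real.sqrt (g y) + a) ^ 2 := by
        have hgyint : g y = ∫ ω, f ω ^ 2 ∂P := hg y
        nlinarith [h1, h2, hEf, ha0]
      calc Real.sqrt (g m) ≤ Real.sqrt ((Real.sqrt (g y) + a) ^ 2) := Real.sqrt_le_sqrt h3
        _ = Real.sqrt (g y) + a := Real.sqrt_sq (by positivity)
    have hca : c * a ≤ a := by nlinarith
    nlinarith [mul_le_mul_of_nonneg_left key hc0.le]
  refine ⟨fun y => ⟨glbfix y, fun hgy => ⟨by positivity, hatt y hgy⟩⟩, ?_, glbfix m⟩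
  constructor
  · rintro v ⟨y, z, hy, hz, rfl⟩
    exact le_trans (mono y hy) (hlow y z hz)
  · intro b hb
    apply (glbfix m).2
    rintro v ⟨z, hz, rfl⟩
    exact hb ⟨m, z, le_rfl, hz, rfl⟩
end

section
/- Let (Ω, 𝔉, P) be a probability space, X a nonempty set, c ∈ (0, 1], and for each x ∈ X let F(x) : Ω → ℝ be a square-integrable random variable. Define f(x) := E[F(x)], h(x) := f(x) + c·(E[(F(x) − f(x))₊²])^{1/2}, and φ(x, y, z) := (c/z)·E[(F(x) − y)₊²] + y + (c/4)·z. Fix ε > 0 and the feasible set S_ε := {(x, y, z) : x ∈ X, y ≥ f(x), z ≥ ε}. Suppose x* minimizes h over X and (x*_ε, y*_ε, z*_ε) minimizes φ over S_ε. Then h(x*_ε) − h(x*) ≤ (c/2)·ε. -/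
open MeasureTheory

/-- Approximate optimality of the truncated lifted problem: if `x*` minimizes
`h(x) = f(x) + c·√(E[(F(x) − f(x))₊²])` over `X` and `(x*_ε, y*_ε, z*_ε)` minimizes
`φ(x, y, z) = (c/z)·E[(F(x) − y)₊²] + y + (c/4)·z` over
`S_ε = {(x, y, z) : y ≥ f(x), z ≥ ε}`, then `h(x*_ε) − h(x*) ≤ (c/2)·ε`. -/
theorem stmt_6 {Ω X : Type*} [MeasurableSpace Ω] [Nonempty X]
    (P : Measure Ω) [IsProbabilityMeasure P]
    (c : ℝ) (hc : c ∈ Set.Ioc (0 : ℝ) 1)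
    (F : X → Ω → ℝ) (hF : ∀ x, MemLp (F x) 2 P)
    (f h : X → ℝ) (φ : X → ℝ → ℝ → ℝ)
    (hf : ∀ x, f x = ∫ ω, F x ω ∂P)
    (hh : ∀ x, h x = f x + c * Real.sqrt (∫ ω, (max (F x ω - f x) 0) ^ 2 ∂P))
    (hφ : ∀ x y z, φ x y z = (c / z) * (∫ ω, (max (F x ω - y) 0) ^ 2 ∂P) + y + (c / 4) * z)
    (ε : ℝ) (hε : 0 < ε)
    (xs : X) (hxs : ∀ x, h xs ≤ h x)
    (xe : X) (ye ze : ℝ) (hye : f xe ≤ ye) (hze : ε ≤ ze)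
    (hmin : ∀ x y z, f x ≤ y → ε ≤ z → φ xe ye ze ≤ φ x y z) :
    h xe - h xs ≤ (c / 2) * ε := by
  obtain ⟨hc0, hc1⟩ := hc
  -- notation
  set a : X → ℝ → ℝ := fun x y => ∫ ω, (max (F x ω - y) 0) ^ 2 ∂P with ha
  have mem : ∀ x y, MemLp (fun ω => max (F x ω - y) 0) 2 P := fun x y =>
    ((hF x).sub (memLp_const y)).pos_part
  have a_nonneg : ∀ x y, 0 ≤ a x y := fun x y =>
    integral_nonneg fun ω => sq_nonneg _
  -- Cauchy-Schwarz: ∫ g ≤ √(∫ g²)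
  have cs : ∀ x y, (∫ ω, max (F x ω - y) 0 ∂P) ≤ Real.sqrt (a x y) := by
    intro x y
    have hv := ProbabilityTheory.variance_nonneg (fun ω => max (F x ω - y) 0) P
    rw [ProbabilityTheory.variance_eq_sub (mem x y)] at hv
    simp only [Pi.pow_apply] at hv
    have h2 : (∫ ω, max (F x ω - y) 0 ∂P) ^ 2 ≤ a x y := by
      simp only [ha]; linarith
    calc (∫ ω, max (F x ω - y) 0 ∂P) ≤ Real.sqrt ((∫ ω, max (F x ω - y) 0 ∂P) ^ 2) := by
          rw [Real.sqrt_sq_eq_abs]; exact le_abs_self _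
      _ ≤ Real.sqrt (a x y) := Real.sqrt_le_sqrt h2
  -- monotonicity: √(a x (f x)) ≤ (y - f x) + √(a x y) when f x ≤ y
  have mono : ∀ x y, f x ≤ y → Real.sqrt (a x (f x)) ≤ (y - f x) + Real.sqrt (a x y) := by
    intro x y hy
    set d := y - f x with hd
    have hd0 : 0 ≤ d := by linarith
    have key : a x (f x) ≤ (Real.sqrt (a x y) + d) ^ 2 := by
      have pt : ∀ ω, (max (F x ω - f x) 0) ^ 2 ≤
          (max (F x ω - y) 0) ^ 2 + 2 * d * max (F x ω - y) 0 + d ^ 2 := by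
        intro ω
        have h1 : max (F x ω - f x) 0 ≤ max (F x ω - y) 0 + d := by
          rcases le_total (F x ω - f x) 0 with hl | hl
          · simp only [max_eq_right hl]; positivity
          · rw [max_eq_left hl]
            have := le_max_left (F x ω - y) 0
            linarith
        have h0 : 0 ≤ max (F x ω - f x) 0 := le_max_right _ _
        nlinarith [h1, h0]
      have iint : a x (f x) ≤ ∫ ω, ((max (F x ω - y) 0) ^ 2 + 2 * d * max (F x ω - y) 0 + d ^ 2) ∂P := by
        apply integral_mono (mem x (f x)).integrable_sq
        · exact (((mem x y).integrable_sq).add (((mem x y).integrable one_le_two).const_mul _)).add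
            (integrable_const _)
        · exact pt
      have heq : (∫ ω, ((max (F x ω - y) 0) ^ 2 + 2 * d * max (F x ω - y) 0 + d ^ 2) ∂P)
          = a x y + 2 * d * (∫ ω, max (F x ω - y) 0 ∂P) + d ^ 2 := by
        have i2 : Integrable (fun ω => 2 * d * max (F x ω - y) 0) P :=
          ((mem x y).integrable one_le_two).const_mul _
        have isq : Integrable (fun ω => (max (F x ω - y) 0) ^ 2) P := (mem x y).integrable_sq
        have i1 : Integrable
            (fun ω => (max (F x ω - y) 0) ^ 2 + 2 * d * max (F x ω - y) 0) P := isq.add i2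
        rw [integral_add i1 (integrable_const _), integral_add isq i2,
          integral_const_mul, integral_const]
        simp [ha]
      rw [heq] at iint
      have hsq : Real.sqrt (a x y) ^ 2 = a x y := Real.sq_sqrt (a_nonneg x y)
      have hcs := cs x y
      nlinarith [hcs, hd0, iint, hsq]
    calc Real.sqrt (a x (f x)) ≤ Real.sqrt ((Real.sqrt (a x y) + d) ^ 2) := Real.sqrt_le_sqrt key
      _ = |Real.sqrt (a x y) + d| := Real.sqrt_sq_eq_abs _
      _ = Real.sqrt (a x y) + d := abs_of_nonneg (by positivity)
      _ = d + Real.sqrt (a x y) := by ring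
  -- claim 1 : h x ≤ φ x y z for feasible (x,y,z)
  have claim1 : ∀ x y z, f x ≤ y → ε ≤ z → h x ≤ φ x y z := by
    intro x y z hy hz
    have hz0 : 0 < z := lt_of_lt_of_le hε hz
    set s := Real.sqrt (a x y) with hs
    have hs0 : 0 ≤ s := Real.sqrt_nonneg _
    have hsq : s ^ 2 = a x y := Real.sq_sqrt (a_nonneg x y)
    have amgm : c * s ≤ (c / z) * a x y + (c / 4) * z := by
      have heq : (c / z) * a x y + (c / 4) * z = (c / z) * (s - z / 2) ^ 2 + c * s := by
        rw [← hsq]; field_simp; ring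
      have : 0 ≤ (c / z) * (s - z / 2) ^ 2 := by positivity
      linarith
    have hmono := mono x y hy
    rw [hφ, hh]
    have : c * Real.sqrt (a x (f x)) ≤ c * ((y - f x) + s) := by
      exact mul_le_mul_of_nonneg_left hmono (le_of_lt hc0)
    have h2 : c * ((y - f x) + s) ≤ (y - f x) + c * s := by
      nlinarith [hc1, hye, hy, hs0]
    show f x + c * Real.sqrt (a x (f x)) ≤ (c / z) * a x y + y + (c / 4) * z
    linarith
  -- claim 2 : φ xe ye ze ≤ h xs + (c/2) ε
  have claim2 : φ xe ye ze ≤ h xs + (c / 2) * ε := by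
    set s := Real.sqrt (a xs (f xs)) with hs
    have hs0 : 0 ≤ s := Real.sqrt_nonneg _
    have hsq : s ^ 2 = a xs (f xs) := Real.sq_sqrt (a_nonneg xs (f xs))
    set z0 := max (2 * s) ε with hz0def
    have hz0 : ε ≤ z0 := le_max_right _ _
    have step := hmin xs (f xs) z0 le_rfl hz0
    have hval : φ xs (f xs) z0 ≤ h xs + (c / 2) * ε := by
      rw [hφ, hh]
      rw [show (∫ ω, (max (F xs ω - f xs) 0) ^ 2 ∂P) = s ^ 2 from hsq.symm,
        Real.sqrt_sq hs0]
      rcases le_total ε (2 * s) with hcase | hcase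
      · have hz0eq : z0 = 2 * s := max_eq_left hcase
        have hspos : 0 < s := by linarith
        rw [hz0eq]
        have : c / (2 * s) * s ^ 2 + c / 4 * (2 * s) = c * s := by
          field_simp; ring
        nlinarith [mul_pos hc0 hε]
      · have hz0eq : z0 = ε := max_eq_right hcase
        rw [hz0eq]
        have h1 : c / ε * s ^ 2 ≤ c / 2 * s := by
          rw [div_mul_eq_mul_div, div_le_iff₀ hε]
          nlinarith [mul_nonneg (mul_nonneg hc0.le hs0) (sub_nonneg.2 hcase)]
        nlinarith [mul_pos hc0 hε, mul_nonneg (le_of_lt hc0) hs0]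
    linarith
  have := claim1 xe ye ze hye hze
  linarith
end

section
/- Let (Ω, 𝔉, P) be a probability space, X a nonempty set, c ∈ (0, 1], and for each x ∈ X let F(x) : Ω → ℝ be a square-integrable random variable. Define f(x) := E[F(x)], h(x) := f(x) + c·(E[(F(x) − f(x))₊²])^{1/2}, and φ(x, y, z) := (c/z)·E[(F(x) − y)₊²] + y + (c/4)·z. Fix ε > 0 and the feasible set S_ε := {(x, y, z) : x ∈ X, y ≥ f(x), z ≥ ε}. Suppose x* minimizes h over X and (x*_ε, y*_ε, z*_ε) minimizes φ over S_ε. Then for every (x̄, ȳ, z̄) ∈ S_ε one has h(x̄) − h(x*) < [φ(x̄, ȳ, z̄) − φ(x*_ε, y*_ε, z*_ε)] + (c/2)·ε. -/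
open MeasureTheory

private lemma cs_aux {Ω : Type*} [MeasurableSpace Ω] (P : Measure Ω) [IsProbabilityMeasure P]
    (g : Ω → ℝ) (hg : MemLp g 2 P) (hpos : ∀ ω, 0 ≤ g ω) :
    ∫ ω, g ω ∂P ≤ Real.sqrt (∫ ω, g ω ^ 2 ∂P) := by
  have hpq : (2:ℝ).HolderConjugate 2 := ⟨by norm_num, by norm_num, by norm_num⟩
  have h1 : MemLp (fun _ : Ω => (1:ℝ)) (ENNReal.ofReal 2) P := memLp_const 1
  have hg2 : MemLp g (ENNReal.ofReal 2) P := by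
    have : ENNReal.ofReal 2 = 2 := by norm_num
    rwa [this]
  have H := integral_mul_le_Lp_mul_Lq_of_nonneg hpq
    (Filter.Eventually.of_forall hpos)
    (Filter.Eventually.of_forall fun _ => (zero_le_one : (0:ℝ) ≤ 1)) hg2 h1
  have h2 : (2:ℝ) = ((2:ℕ):ℝ) := by norm_num
  simp only [mul_one, one_mul, h2, Real.rpow_natCast] at H
  simpa [Real.sqrt_eq_rpow, one_pow, integral_const] using H

private lemma minkowski_aux {Ω : Type*} [MeasurableSpace Ω] (P : Measure Ω)
    [IsProbabilityMeasure P] (g1 g2 : Ω → ℝ) (hg1 : MemLp g1 2 P) (hg2 : MemLp g2 2 P)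
    (h1 : ∀ ω, 0 ≤ g1 ω) (t : ℝ) (ht : 0 ≤ t) (hle : ∀ ω, g1 ω ≤ g2 ω + t)
    (h2 : ∀ ω, 0 ≤ g2 ω) :
    Real.sqrt (∫ ω, g1 ω ^ 2 ∂P) ≤ Real.sqrt (∫ ω, g2 ω ^ 2 ∂P) + t := by
  set A := ∫ ω, g2 ω ^ 2 ∂P with hA
  set B := ∫ ω, g2 ω ∂P with hB
  have hAnn : 0 ≤ A := integral_nonneg fun ω => sq_nonneg _
  have hBle : B ≤ Real.sqrt A := cs_aux P g2 hg2 h2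
  have hint2 : Integrable (fun ω => g2 ω ^ 2) P := hg2.integrable_sq
  have hintB : Integrable g2 P := hg2.integrable (by norm_num)
  have hexp : ∫ ω, (g2 ω + t) ^ 2 ∂P = A + 2 * t * B + t ^ 2 := by
    have : ∀ ω, (g2 ω + t) ^ 2 = g2 ω ^ 2 + (2 * t) * g2 ω + t ^ 2 := fun ω => by ring
    simp_rw [this]
    have hi1 : Integrable (fun ω => g2 ω ^ 2 + 2 * t * g2 ω) P := hint2.add (hintB.const_mul _)
    rw [integral_add hi1 (integrable_const _),
      integral_add hint2 (hintB.const_mul _), integral_const_mul, integral_const]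
    simp [hA, hB]
  have hmono : ∫ ω, g1 ω ^ 2 ∂P ≤ ∫ ω, (g2 ω + t) ^ 2 ∂P := by
    refine integral_mono hg1.integrable_sq ((hg2.add (memLp_const t)).integrable_sq) fun ω => ?_
    exact pow_le_pow_left₀ (h1 ω) (hle ω) 2
  have hstep : ∫ ω, g1 ω ^ 2 ∂P ≤ (Real.sqrt A + t) ^ 2 := by
    have : (Real.sqrt A + t) ^ 2 = A + 2 * t * Real.sqrt A + t ^ 2 := by
      have := Real.sq_sqrt hAnn
      nlinarith [this]
    nlinarith [hmono, hexp, hBle, ht]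
  calc Real.sqrt (∫ ω, g1 ω ^ 2 ∂P) ≤ Real.sqrt ((Real.sqrt A + t) ^ 2) :=
        Real.sqrt_le_sqrt hstep
    _ = Real.sqrt A + t := Real.sqrt_sq (by positivity)

/-- Optimality-gap bound via the truncated lifted problem: with `x*` a minimizer of `h`
over `X` and `(x*_ε, y*_ε, z*_ε)` a minimizer of `φ` over `S_ε`, every feasible
`(x̄, ȳ, z̄) ∈ S_ε` satisfies
`h(x̄) − h(x*) < [φ(x̄, ȳ, z̄) − φ(x*_ε, y*_ε, z*_ε)] + (c/2)·ε`. -/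
theorem stmt_7 {Ω X : Type*} [MeasurableSpace Ω] [Nonempty X]
    (P : Measure Ω) [IsProbabilityMeasure P]
    (c : ℝ) (hc : c ∈ Set.Ioc (0 : ℝ) 1)
    (F : X → Ω → ℝ) (hF : ∀ x, MemLp (F x) 2 P)
    (f h : X → ℝ) (φ : X → ℝ → ℝ → ℝ)
    (hf : ∀ x, f x = ∫ ω, F x ω ∂P)
    (hh : ∀ x, h x = f x + c * Real.sqrt (∫ ω, (max (F x ω - f x) 0) ^ 2 ∂P))
    (hφ : ∀ x y z, φ x y z = (c / z) * (∫ ω, (max (F x ω - y) 0) ^ 2 ∂P) + y + (c / 4) * z)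
    (ε : ℝ) (hε : 0 < ε)
    (xs : X) (hxs : ∀ x, h xs ≤ h x)
    (xe : X) (ye ze : ℝ) (hye : f xe ≤ ye) (hze : ε ≤ ze)
    (hmin : ∀ x y z, f x ≤ y → ε ≤ z → φ xe ye ze ≤ φ x y z) :
    ∀ xb : X, ∀ yb zb : ℝ, f xb ≤ yb → ε ≤ zb →
      h xb - h xs < (φ xb yb zb - φ xe ye ze) + (c / 2) * ε := by
  obtain ⟨hc0, hc1⟩ := hc
  intro xb yb zb hyb hzb
  set D : X → ℝ → ℝ := fun x y => ∫ ω, (max (F x ω - y) 0) ^ 2 ∂P with hD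
  set d : X → ℝ → ℝ := fun x y => Real.sqrt (D x y) with hd
  have hmem : ∀ x y, MemLp (fun ω => max (F x ω - y) 0) 2 P := fun x y =>
    ((hF x).sub (memLp_const y)).pos_part
  have hDnn : ∀ x y, 0 ≤ D x y := fun x y => integral_nonneg fun ω => sq_nonneg _
  have hdnn : ∀ x y, 0 ≤ d x y := fun x y => Real.sqrt_nonneg _
  have hdsq : ∀ x y, d x y ^ 2 = D x y := fun x y => Real.sq_sqrt (hDnn x y)
  -- AM-GM : c * d ≤ (c/z) * D + (c/4) * z  for z > 0
  have hamgm : ∀ x y z, 0 < z → c * d x y ≤ (c / z) * D x y + (c / 4) * z := by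
    intro x y z hz
    have h1 := sq_nonneg (d x y - z / 2)
    have h2 := hdsq x y
    rw [div_mul_eq_mul_div, div_add' _ _ _ (ne_of_gt hz), le_div_iff₀ hz]
    nlinarith [hdnn x y, hz, hc0]
  -- monotonicity lemma: for a ≤ b, d x a ≤ d x b + (b - a)
  have hmono : ∀ x (a b : ℝ), a ≤ b → d x a ≤ d x b + (b - a) := by
    intro x a b hab
    refine minkowski_aux P _ _ (hmem x a) (hmem x b) (fun ω => le_max_right _ _)
      (b - a) (by linarith) (fun ω => ?_) (fun ω => le_max_right _ _)
    rcases le_total (F x ω - a) 0 with hca | hca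
    · have := le_max_right (F x ω - b) (0:ℝ)
      simp [max_eq_right hca]; linarith
    · rw [max_eq_left hca]
      have := le_max_left (F x ω - b) (0:ℝ)
      linarith
  -- Step A : h xb ≤ φ xb yb zb
  have hzb0 : 0 < zb := lt_of_lt_of_le hε hzb
  have stepA : h xb ≤ φ xb yb zb := by
    have h1 : d xb (f xb) ≤ d xb yb + (yb - f xb) := hmono xb (f xb) yb hyb
    have h2 : c * d xb (f xb) ≤ c * d xb yb + (yb - f xb) := by
      have := mul_le_mul_of_nonneg_left h1 (le_of_lt hc0)
      nlinarith [hdnn xb yb]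
    have h3 := hamgm xb yb zb hzb0
    rw [hh xb, hφ xb yb zb]
    have : Real.sqrt (∫ ω, (max (F xb ω - f xb) 0) ^ 2 ∂P) = d xb (f xb) := rfl
    rw [this]
    linarith
  -- Step B : φ xe ye ze < h xs + (c/2) * ε
  have stepB : φ xe ye ze < h xs + (c / 2) * ε := by
    set ds := d xs (f xs) with hds
    set zs := max ε (2 * ds) with hzs
    have hzs0 : ε ≤ zs := le_max_left _ _
    have hzspos : 0 < zs := lt_of_lt_of_le hε hzs0
    have hle1 : φ xe ye ze ≤ φ xs (f xs) zs := hmin xs (f xs) zs le_rfl hzs0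
    have hval : φ xs (f xs) zs = (c / zs) * D xs (f xs) + f xs + (c / 4) * zs := hφ _ _ _
    have hcore : (c / zs) * D xs (f xs) + (c / 4) * zs < c * ds + (c / 2) * ε := by
      have hDval : D xs (f xs) = ds ^ 2 := (hdsq xs (f xs)).symm
      rcases le_total ε (2 * ds) with hcase | hcase
      · have hz : zs = 2 * ds := max_eq_right hcase
        have hds0 : 0 < ds := by nlinarith
        rw [hz, hDval]
        have heq : c / (2 * ds) * ds ^ 2 = c * ds / 2 := by
          field_simp
        rw [heq]
        nlinarith [mul_pos hc0 hε]
      · have hz : zs = ε := max_eq_left hcase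
        rw [hz, hDval, div_mul_eq_mul_div, div_add' _ _ _ (ne_of_gt hε), div_lt_iff₀ hε]
        nlinarith [mul_nonneg hc0.le (mul_nonneg (hdnn xs (f xs)) (by linarith : (0:ℝ) ≤ ε - 2 * ds)),
          mul_pos hc0 (mul_pos hε hε),
          mul_nonneg hc0.le (mul_nonneg (hdnn xs (f xs)) hε.le)]
    have : h xs = f xs + c * ds := hh xs
    linarith
  -- combine
  have := hxs xb
  linarith
end

section
/- Let (Ω, 𝔉, P) be a probability space, V : Ω → ℝ a random variable with mean μ := E[V] and E[(V − μ)₊⁴] ≤ M⁴, and let K > 0, c ∈ (0, 1], z > 0, and y ∈ ℝ with |y − μ| ≤ 2K. Then E[( −(c/z²)·(V − y)₊² + c/4 )²] ≤ (12c²/z⁴)·(M⁴ + 16K⁴) + 3c²/16. -/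
open MeasureTheory

/-- Second-moment bound for the stochastic subgradient of the Lagrangian with respect to
`z`: if `E[(V − E[V])₊⁴] ≤ M⁴` and `|y − E[V]| ≤ 2K`, then
`E[(−(c/z²)(V − y)₊² + c/4)²] ≤ (12c²/z⁴)(M⁴ + 16K⁴) + 3c²/16`. -/
theorem stmt_10 {Ω : Type*} [MeasurableSpace Ω] (P : Measure Ω) [IsProbabilityMeasure P]
    (V : Ω → ℝ) (hV : Integrable V P)
    (M : ℝ) (hM4int : Integrable (fun ω => (max (V ω - ∫ ω', V ω' ∂P) 0) ^ 4) P)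
    (hM : (∫ ω, (max (V ω - ∫ ω', V ω' ∂P) 0) ^ 4 ∂P) ≤ M ^ 4)
    (K c z y : ℝ) (hK : 0 < K) (hc : c ∈ Set.Ioc (0 : ℝ) 1) (hz : 0 < z)
    (hy : |y - ∫ ω, V ω ∂P| ≤ 2 * K) :
    (∫ ω, (-(c / z ^ 2) * (max (V ω - y) 0) ^ 2 + c / 4) ^ 2 ∂P)
      ≤ 12 * c ^ 2 / z ^ 4 * (M ^ 4 + 16 * K ^ 4) + 3 * c ^ 2 / 16 := by
  obtain ⟨hc0, hc1⟩ := hc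
  set μ := ∫ ω, V ω ∂P with hμ
  have hI0 : 0 ≤ ∫ ω, (max (V ω - μ) 0) ^ 4 ∂P :=
    integral_nonneg fun ω => by positivity
  have hMnn : 0 ≤ M ^ 4 := le_trans hI0 hM
  have hsq : c ^ 2 / z ^ 4 = (c / z ^ 2) ^ 2 := by
    rw [div_pow]; congr 1; ring
  have hbound : ∀ ω, (-(c / z ^ 2) * (max (V ω - y) 0) ^ 2 + c / 4) ^ 2
      ≤ c ^ 2 / z ^ 4 * (8 * (max (V ω - μ) 0) ^ 4 + 128 * K ^ 4) + c ^ 2 / 16 := by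
    intro ω
    set t := max (V ω - y) 0 with ht
    set u := max (V ω - μ) 0 with hu
    have ht0 : 0 ≤ t := le_max_right _ _
    have hu0 : 0 ≤ u := le_max_right _ _
    have htu : t ≤ u + 2 * K := by
      apply max_le _ (by positivity)
      have h1 : V ω - μ ≤ u := le_max_left _ _
      have h2 := abs_le.mp hy
      linarith [h2.1]
    have ht4 : t ^ 4 ≤ 8 * u ^ 4 + 128 * K ^ 4 := by
      have h1 : t ^ 4 ≤ (u + 2 * K) ^ 4 := pow_le_pow_left₀ ht0 htu 4
      nlinarith [sq_nonneg (u - 2 * K), sq_nonneg (u ^ 2 - 4 * K ^ 2), sq_nonneg u,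
        sq_nonneg K, hu0, hK.le, mul_nonneg hu0 hK.le]
    have hw : (0:ℝ) ≤ c / z ^ 2 := by positivity
    rw [hsq]
    nlinarith [mul_le_mul_of_nonneg_left ht4 (sq_nonneg (c / z ^ 2)),
      mul_nonneg (mul_nonneg hw (sq_nonneg t)) hc0.le]
  have h8 : Integrable (fun ω => 8 * (max (V ω - μ) 0) ^ 4 + 128 * K ^ 4) P :=
    (hM4int.const_mul 8).add (integrable_const _)
  have h1 : Integrable (fun ω =>
      c ^ 2 / z ^ 4 * (8 * (max (V ω - μ) 0) ^ 4 + 128 * K ^ 4)) P := h8.const_mul _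
  have hle : (∫ ω, (-(c / z ^ 2) * (max (V ω - y) 0) ^ 2 + c / 4) ^ 2 ∂P)
      ≤ ∫ ω, (c ^ 2 / z ^ 4 * (8 * (max (V ω - μ) 0) ^ 4 + 128 * K ^ 4) + c ^ 2 / 16) ∂P := by
    apply integral_mono_of_nonneg
    · filter_upwards with ω using sq_nonneg _
    · exact h1.add (integrable_const _)
    · filter_upwards with ω using hbound ω
  have h28 : Integrable (fun ω => 8 * (max (V ω - μ) 0) ^ 4) P := hM4int.const_mul 8
  have hcalc : (∫ ω, (c ^ 2 / z ^ 4 * (8 * (max (V ω - μ) 0) ^ 4 + 128 * K ^ 4) + c ^ 2 / 16) ∂P)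
      = c ^ 2 / z ^ 4 * (8 * (∫ ω, (max (V ω - μ) 0) ^ 4 ∂P) + 128 * K ^ 4) + c ^ 2 / 16 := by
    rw [integral_add h1 (integrable_const _), integral_const_mul,
      integral_add h28 (integrable_const _), integral_const_mul, integral_const, integral_const]
    simp
  rw [hcalc] at hle
  have hw4 : (0:ℝ) ≤ c ^ 2 / z ^ 4 := by positivity
  have hK4 : (0:ℝ) ≤ K ^ 4 := by positivity
  have h12 : 12 * c ^ 2 / z ^ 4 = 12 * (c ^ 2 / z ^ 4) := by ring
  have h3 : 3 * c ^ 2 / 16 = 3 * (c ^ 2 / 16) := by ring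
  rw [h12, h3]
  set I := ∫ ω, (max (V ω - μ) 0) ^ 4 ∂P with hI
  set W := c ^ 2 / z ^ 4 with hW
  have hWM : W * I ≤ W * M ^ 4 := mul_le_mul_of_nonneg_left hM hw4
  nlinarith [hle, hWM, mul_nonneg hw4 hK4, sq_nonneg c, mul_nonneg hw4 hI0]
end

section
/- Let (Ω, 𝔉, P) be a probability space, V : Ω → ℝ a random variable with mean μ := E[V] and E[(V − μ)²] ≤ β², and W : Ω → ℝⁿ a random vector with mean w := E[W] such that ‖w‖₂ ≤ L_f and E[‖W − w‖₂²] ≤ σ_f². Assume E[‖2(V − μ)₊·(W − w)‖₂²] ≤ L_G². Let K > 0, c ∈ (0, 1], z > 0, λ ∈ [0, 1], and y ∈ ℝ with |y − μ| ≤ 2K. Then E[‖(2c/z)·(V − y)₊·W + λ·W‖₂²] ≤ (3c²/z²)·[L_G² + 4L_f²β² + 64(L_f² + σ_f²)K²] + 12(L_f² + σ_f²). -/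
open MeasureTheory

set_option maxHeartbeats 800000

private lemma sq_add2_aux (x a b : ℝ) (hx : 0 ≤ x) (h : x ≤ a + b) :
    x ^ 2 ≤ 2 * a ^ 2 + 2 * b ^ 2 := by nlinarith [sq_nonneg (a - b)]

private lemma sq_add3_aux (x a b c : ℝ) (hx : 0 ≤ x) (h : x ≤ a + b + c) :
    x ^ 2 ≤ 3 * (a ^ 2 + b ^ 2 + c ^ 2) := by
  nlinarith [sq_nonneg (a - b), sq_nonneg (a - c), sq_nonneg (b - c)]

/-- Second-moment bound for the stochastic subgradient of the Lagrangian with respect to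
`x`: under the stated moment bounds on `V` (playing the role of `F(x,ξ)`) and on the
random vector `W` (playing the role of `F'(x,ξ)`),
`E[‖(2c/z)(V − y)₊·W + λ·W‖²] ≤ (3c²/z²)[L_G² + 4L_f²β² + 64(L_f² + σ_f²)K²]
  + 12(L_f² + σ_f²)`. -/
theorem stmt_11 {n : ℕ} {Ω : Type*} [MeasurableSpace Ω] (P : Measure Ω)
    [IsProbabilityMeasure P]
    (V : Ω → ℝ) (hV : Integrable V P)
    (β : ℝ) (hV2 : Integrable (fun ω => (V ω - ∫ ω', V ω' ∂P) ^ 2) P)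
    (hβ : (∫ ω, (V ω - ∫ ω', V ω' ∂P) ^ 2 ∂P) ≤ β ^ 2)
    (W : Ω → EuclideanSpace ℝ (Fin n)) (hW : Integrable W P)
    (Lf σf LG : ℝ)
    (hw : ‖∫ ω, W ω ∂P‖ ≤ Lf)
    (hW2 : Integrable (fun ω => ‖W ω - ∫ ω', W ω' ∂P‖ ^ 2) P)
    (hσ : (∫ ω, ‖W ω - ∫ ω', W ω' ∂P‖ ^ 2 ∂P) ≤ σf ^ 2)
    (hG2 : Integrable
      (fun ω => ‖(2 * max (V ω - ∫ ω', V ω' ∂P) 0) • (W ω - ∫ ω', W ω' ∂P)‖ ^ 2) P)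
    (hLG : (∫ ω, ‖(2 * max (V ω - ∫ ω', V ω' ∂P) 0) • (W ω - ∫ ω', W ω' ∂P)‖ ^ 2 ∂P)
      ≤ LG ^ 2)
    (K c z lam y : ℝ) (hK : 0 < K) (hc : c ∈ Set.Ioc (0 : ℝ) 1) (hz : 0 < z)
    (hlam : lam ∈ Set.Icc (0 : ℝ) 1) (hy : |y - ∫ ω, V ω ∂P| ≤ 2 * K) :
    (∫ ω, ‖((2 * c / z) * max (V ω - y) 0) • W ω + lam • W ω‖ ^ 2 ∂P)
      ≤ (3 * c ^ 2 / z ^ 2) * (LG ^ 2 + 4 * Lf ^ 2 * β ^ 2 + 64 * (Lf ^ 2 + σf ^ 2) * K ^ 2)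
        + 12 * (Lf ^ 2 + σf ^ 2) := by
  obtain ⟨hc0, hc1⟩ := hc
  obtain ⟨hl0, hl1⟩ := hlam
  set μ := ∫ ω', V ω' ∂P with hμdef
  set w := ∫ ω', W ω' ∂P with hwdef
  set r : ℝ := c / z with hr
  have hr0 : 0 ≤ r := by rw [hr]; positivity
  have hLf0 : 0 ≤ Lf := le_trans (norm_nonneg _) hw
  have hw2 : ‖w‖ ^ 2 ≤ Lf ^ 2 := by nlinarith [norm_nonneg w]
  set C1 : ℝ := 192 * K ^ 2 * r ^ 2 + 12 with hC1
  have hC10 : 0 ≤ C1 := by rw [hC1]; positivity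
  set g : Ω → ℝ := fun ω =>
      3 * r ^ 2 * ‖(2 * max (V ω - μ) 0) • (W ω - w)‖ ^ 2
      + (12 * r ^ 2 * ‖w‖ ^ 2) * (V ω - μ) ^ 2
      + (C1 * ‖W ω - w‖ ^ 2 + C1 * ‖w‖ ^ 2) with hgdef
  have hgint : Integrable g P :=
    ((hG2.const_mul _).add (hV2.const_mul _)).add
      ((hW2.const_mul _).add (integrable_const _))
  have hpt : ∀ ω, ‖((2 * c / z) * max (V ω - y) 0) • W ω + lam • W ω‖ ^ 2 ≤ g ω := by
    intro ω
    set t : ℝ := 2 * r * max (V ω - μ) 0 with htdef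
    set d : ℝ := max (V ω - y) 0 - max (V ω - μ) 0 with hddef
    set s : ℝ := 2 * r * d + lam with hsdef
    have hdecomp : ((2 * c / z) * max (V ω - y) 0) • W ω + lam • W ω
        = t • (W ω - w) + t • w + s • W ω := by
      simp only [htdef, hsdef, hddef, hr]
      module
    have hd : |d| ≤ 2 * K := by
      have h1 : |max (V ω - y) 0 - max (V ω - μ) 0| ≤ |(V ω - y) - (V ω - μ)| :=
        abs_max_sub_max_le_abs _ _ _
      have h2 : (V ω - y) - (V ω - μ) = -(y - μ) := by ring
      calc |d| ≤ |(V ω - y) - (V ω - μ)| := h1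
        _ = |y - μ| := by rw [h2, abs_neg]
        _ ≤ 2 * K := hy
    have hd2 : d ^ 2 ≤ 4 * K ^ 2 := by nlinarith [abs_nonneg d, sq_abs d]
    have hs2 : s ^ 2 ≤ 32 * K ^ 2 * r ^ 2 + 2 := by
      rw [hsdef]
      nlinarith [sq_nonneg (2 * r * d - lam), mul_le_mul_of_nonneg_left hd2 (sq_nonneg r)]
    have hm0 : 0 ≤ max (V ω - μ) 0 := le_max_right _ _
    have hmabs : max (V ω - μ) 0 ≤ |V ω - μ| := max_le (le_abs_self _) (abs_nonneg _)
    have hm2 : (max (V ω - μ) 0) ^ 2 ≤ (V ω - μ) ^ 2 := by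
      nlinarith [sq_abs (V ω - μ)]
    have e1 : ‖t • (W ω - w)‖ ^ 2
        = r ^ 2 * ‖(2 * max (V ω - μ) 0) • (W ω - w)‖ ^ 2 := by
      rw [norm_smul, norm_smul, Real.norm_eq_abs, Real.norm_eq_abs, mul_pow, mul_pow,
        sq_abs, sq_abs, htdef]
      ring
    have e2 : ‖t • w‖ ^ 2 ≤ 4 * r ^ 2 * ‖w‖ ^ 2 * (V ω - μ) ^ 2 := by
      rw [norm_smul, Real.norm_eq_abs, mul_pow, sq_abs, htdef]
      have h := mul_le_mul_of_nonneg_left hm2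
        (show (0:ℝ) ≤ 4 * r ^ 2 * ‖w‖ ^ 2 by positivity)
      nlinarith [h]
    have hWsplit : ‖W ω‖ ^ 2 ≤ 2 * ‖W ω - w‖ ^ 2 + 2 * ‖w‖ ^ 2 := by
      have h := norm_add_le (W ω - w) w
      rw [sub_add_cancel] at h
      exact sq_add2_aux _ _ _ (norm_nonneg _) h
    have e3 : ‖s • W ω‖ ^ 2 ≤ (32 * K ^ 2 * r ^ 2 + 2)
        * (2 * ‖W ω - w‖ ^ 2 + 2 * ‖w‖ ^ 2) := by
      rw [norm_smul, Real.norm_eq_abs, mul_pow, sq_abs]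
      calc s ^ 2 * ‖W ω‖ ^ 2 ≤ (32 * K ^ 2 * r ^ 2 + 2) * ‖W ω‖ ^ 2 :=
            mul_le_mul_of_nonneg_right hs2 (sq_nonneg _)
        _ ≤ (32 * K ^ 2 * r ^ 2 + 2) * (2 * ‖W ω - w‖ ^ 2 + 2 * ‖w‖ ^ 2) :=
            mul_le_mul_of_nonneg_left hWsplit (by positivity)
    have h3 : ‖t • (W ω - w) + t • w + s • W ω‖
        ≤ ‖t • (W ω - w)‖ + ‖t • w‖ + ‖s • W ω‖ := norm_add₃_le
    have h3sq : ‖t • (W ω - w) + t • w + s • W ω‖ ^ 2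
        ≤ 3 * (‖t • (W ω - w)‖ ^ 2 + ‖t • w‖ ^ 2 + ‖s • W ω‖ ^ 2) :=
      sq_add3_aux _ _ _ _ (norm_nonneg _) h3
    rw [hdecomp]
    have hgval : g ω = 3 * r ^ 2 * ‖(2 * max (V ω - μ) 0) • (W ω - w)‖ ^ 2
        + 3 * (4 * r ^ 2 * ‖w‖ ^ 2 * (V ω - μ) ^ 2)
        + 3 * ((32 * K ^ 2 * r ^ 2 + 2) * (2 * ‖W ω - w‖ ^ 2 + 2 * ‖w‖ ^ 2)) := by
      rw [hgdef]; simp only; rw [hC1]; ring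
    rw [hgval]
    linarith [e1, e2, e3, h3sq]
  have hle : (∫ ω, ‖((2 * c / z) * max (V ω - y) 0) • W ω + lam • W ω‖ ^ 2 ∂P)
      ≤ ∫ ω, g ω ∂P := by
    refine integral_mono_of_nonneg (Filter.Eventually.of_forall fun ω => ?_) hgint
      (Filter.Eventually.of_forall hpt)
    positivity
  have hgsplit : (∫ ω, g ω ∂P)
      = 3 * r ^ 2 * (∫ ω, ‖(2 * max (V ω - μ) 0) • (W ω - w)‖ ^ 2 ∂P)
      + (12 * r ^ 2 * ‖w‖ ^ 2) * (∫ ω, (V ω - μ) ^ 2 ∂P)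
      + (C1 * (∫ ω, ‖W ω - w‖ ^ 2 ∂P) + C1 * ‖w‖ ^ 2) := by
    have iG : Integrable (fun ω => 3 * r ^ 2 * ‖(2 * max (V ω - μ) 0) • (W ω - w)‖ ^ 2) P :=
      hG2.const_mul _
    have iV : Integrable (fun ω => (12 * r ^ 2 * ‖w‖ ^ 2) * (V ω - μ) ^ 2) P :=
      hV2.const_mul _
    have iW : Integrable (fun ω => C1 * ‖W ω - w‖ ^ 2) P := hW2.const_mul _
    have ic : Integrable (fun (_ : Ω) => C1 * ‖w‖ ^ 2) P := integrable_const _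
    have iGV : Integrable (fun ω => 3 * r ^ 2 * ‖(2 * max (V ω - μ) 0) • (W ω - w)‖ ^ 2
        + (12 * r ^ 2 * ‖w‖ ^ 2) * (V ω - μ) ^ 2) P := iG.add iV
    have iWc : Integrable (fun ω => C1 * ‖W ω - w‖ ^ 2 + C1 * ‖w‖ ^ 2) P := iW.add ic
    rw [hgdef]
    simp only
    rw [integral_add iGV iWc, integral_add iG iV, integral_add iW ic,
      integral_const_mul, integral_const_mul, integral_const_mul, integral_const]
    simp [measure_univ]
  have hIV0 : 0 ≤ ∫ ω, (V ω - μ) ^ 2 ∂P := integral_nonneg fun ω => sq_nonneg _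
  have h1 : 3 * r ^ 2 * (∫ ω, ‖(2 * max (V ω - μ) 0) • (W ω - w)‖ ^ 2 ∂P)
      ≤ 3 * r ^ 2 * LG ^ 2 :=
    mul_le_mul_of_nonneg_left hLG (by positivity)
  have h2 : ‖w‖ ^ 2 * (∫ ω, (V ω - μ) ^ 2 ∂P) ≤ Lf ^ 2 * β ^ 2 :=
    mul_le_mul hw2 hβ hIV0 (by positivity)
  have h3 : C1 * (∫ ω, ‖W ω - w‖ ^ 2 ∂P) + C1 * ‖w‖ ^ 2 ≤ C1 * (σf ^ 2 + Lf ^ 2) := by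
    have h := mul_le_mul_of_nonneg_left (add_le_add hσ hw2) hC10
    calc C1 * (∫ ω, ‖W ω - w‖ ^ 2 ∂P) + C1 * ‖w‖ ^ 2
        = C1 * ((∫ ω, ‖W ω - w‖ ^ 2 ∂P) + ‖w‖ ^ 2) := by ring
      _ ≤ C1 * (σf ^ 2 + Lf ^ 2) := h
  have h2' : (12 * r ^ 2 * ‖w‖ ^ 2) * (∫ ω, (V ω - μ) ^ 2 ∂P)
      ≤ 12 * r ^ 2 * (Lf ^ 2 * β ^ 2) := by
    have h := mul_le_mul_of_nonneg_left h2 (show (0:ℝ) ≤ 12 * r ^ 2 by positivity)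
    calc (12 * r ^ 2 * ‖w‖ ^ 2) * (∫ ω, (V ω - μ) ^ 2 ∂P)
        = 12 * r ^ 2 * (‖w‖ ^ 2 * (∫ ω, (V ω - μ) ^ 2 ∂P)) := by ring
      _ ≤ 12 * r ^ 2 * (Lf ^ 2 * β ^ 2) := h
  have hRHS : (3 * c ^ 2 / z ^ 2) * (LG ^ 2 + 4 * Lf ^ 2 * β ^ 2
        + 64 * (Lf ^ 2 + σf ^ 2) * K ^ 2) + 12 * (Lf ^ 2 + σf ^ 2)
      = 3 * r ^ 2 * LG ^ 2 + 12 * r ^ 2 * (Lf ^ 2 * β ^ 2)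
        + C1 * (σf ^ 2 + Lf ^ 2) := by
    rw [hC1, hr]; ring
  rw [hRHS]
  calc (∫ ω, ‖((2 * c / z) * max (V ω - y) 0) • W ω + lam • W ω‖ ^ 2 ∂P)
      ≤ ∫ ω, g ω ∂P := hle
    _ = _ := hgsplit
    _ ≤ _ := by linarith [h1, h2', h3]
end

section
/- Let X be a nonempty set, g : X → [0, ∞) and f : X → ℝ functions, and x* ∈ X a point with f(x*) ≤ f(x) and g(x*) ≤ g(x) for all x ∈ X. Define h(x) := (g(x))^{1/2} + f(x). Then for every ε > 0 and every x ∈ X with h(x) − h(x*) ≤ ε, one has g(x) − g(x*) ≤ max{ 2·(2·g(x*))^{1/2}·ε, 8ε² }. -/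
/-- Optimality-gap transfer: if `x*` simultaneously minimizes `f` and the nonnegative
function `g` over `X` and `h = √g + f`, then any `ε`-optimal point `x` of `h` satisfies
`g(x) − g(x*) ≤ max{2·√(2·g(x*))·ε, 8ε²}`. -/
theorem stmt_14 {X : Type*} (g : X → ℝ) (hg : ∀ x, 0 ≤ g x) (f : X → ℝ)
    (xs : X) (hfmin : ∀ x, f xs ≤ f x) (hgmin : ∀ x, g xs ≤ g x)
    (h : X → ℝ) (hh : ∀ x, h x = Real.sqrt (g x) + f x)
    (ε : ℝ) (hε : 0 < ε) (x : X) (hx : h x - h xs ≤ ε) :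
    g x - g xs ≤ max (2 * Real.sqrt (2 * g xs) * ε) (8 * ε ^ 2) := by
  set a := Real.sqrt (g xs) with ha
  set b := Real.sqrt (g x) with hb
  have ha0 : 0 ≤ a := Real.sqrt_nonneg _
  have hb0 : 0 ≤ b := Real.sqrt_nonneg _
  have hab : b - a ≤ ε := by
    have := hfmin x
    rw [hh x, hh xs] at hx
    linarith
  have hga : g xs = a ^ 2 := (Real.sq_sqrt (hg xs)).symm
  have hgb : g x = b ^ 2 := (Real.sq_sqrt (hg x)).symm
  have hkey : g x - g xs ≤ ε * (2 * a + ε) := by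
    rw [hga, hgb]
    nlinarith
  have hs2 : Real.sqrt (2 * g xs) = Real.sqrt 2 * a := by
    rw [ha, Real.sqrt_mul (by norm_num)]
  have h2 : (1.414 : ℝ) ≤ Real.sqrt 2 := by
    have : Real.sqrt 1.999396 ≤ Real.sqrt 2 := Real.sqrt_le_sqrt (by norm_num)
    have he : Real.sqrt 1.999396 = 1.414 := by
      rw [show (1.999396 : ℝ) = 1.414 ^ 2 by norm_num]
      exact Real.sqrt_sq (by norm_num)
    linarith
  rcases le_or_gt ε ((2 * Real.sqrt 2 - 2) * a) with hc | hc
  · apply le_trans hkey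
    apply le_max_of_le_left
    rw [hs2]
    nlinarith
  · apply le_trans hkey
    apply le_max_of_le_right
    have hs2le : Real.sqrt 2 ≤ 1.5 := by
      rw [show (1.5 : ℝ) = Real.sqrt (1.5 ^ 2) by rw [Real.sqrt_sq]; norm_num]
      exact Real.sqrt_le_sqrt (by norm_num)
    -- from hc : (2√2-2) a < ε, so a < ε/(2√2-2)
    nlinarith [mul_pos hε hε, sq_nonneg (Real.sqrt 2)]
end

section
/- Let (Ω, 𝔉, P) be a probability space, p > 1 a real number, c ∈ (0, 1], and U : Ω → ℝ a random variable with E[|U|^p] < ∞. Then the function Φ(y) := y + c·(E[(U − y)₊^p])^{1/p} is nondecreasing on ℝ: for all y₁ ≤ y₂ one has Φ(y₁) ≤ Φ(y₂). -/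
open MeasureTheory

/-- Monotonicity of the order-`p` mean-upper-semideviation from the target `y`:
`Φ(y) = y + c·(E[(U − y)₊^p])^{1/p}` is nondecreasing when `p > 1` and `c ∈ (0, 1]`. -/
theorem stmt_17 {Ω : Type*} [MeasurableSpace Ω] (P : Measure Ω) [IsProbabilityMeasure P]
    (p : ℝ) (hp : 1 < p) (c : ℝ) (hc : c ∈ Set.Ioc (0 : ℝ) 1)
    (U : Ω → ℝ) (hUm : AEStronglyMeasurable U P)
    (hUp : Integrable (fun ω => |U ω| ^ p) P) :
    Monotone (fun y : ℝ => y + c * (∫ ω, (max (U ω - y) 0) ^ p ∂P) ^ (1 / p)) := by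
  have hp0 : (0:ℝ) < p := lt_trans zero_lt_one hp
  have hp0' : p ≠ 0 := ne_of_gt hp0
  -- measurability of the positive parts
  have hm : ∀ y : ℝ, AEMeasurable (fun ω => max (U ω - y) 0) P := fun y =>
    (hUm.aemeasurable.sub aemeasurable_const).max aemeasurable_const
  have hnn : ∀ (y : ℝ) (ω : Ω), (0:ℝ) ≤ max (U ω - y) 0 := fun y ω => le_max_right _ _
  -- integrability of (max (U - y) 0)^p
  have hint : ∀ y : ℝ, Integrable (fun ω => (max (U ω - y) 0) ^ p) P := by
    intro y
    have hmeas : AEStronglyMeasurable (fun ω => (max (U ω - y) 0) ^ p) P :=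
      ((hm y).pow_const p).aestronglyMeasurable
    refine Integrable.mono' ((hUp.const_mul (2 ^ p)).add
      (integrable_const ((2:ℝ) ^ p * |y| ^ p))) hmeas ?_
    filter_upwards with ω
    have h1 : max (U ω - y) 0 ≤ |U ω| + |y| := by
      refine max_le ?_ (by positivity)
      have := abs_sub_abs_le_abs_sub (U ω) y
      have h2 := le_abs_self (U ω); have h3 := neg_abs_le y; linarith
    have h4 : (max (U ω - y) 0) ^ p ≤ (|U ω| + |y|) ^ p :=
      Real.rpow_le_rpow (hnn y ω) h1 (le_of_lt hp0)
    have h5 : (|U ω| + |y|) ^ p ≤ (2 * max |U ω| |y|) ^ p := by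
      refine Real.rpow_le_rpow (by positivity) ?_ (le_of_lt hp0)
      rcases le_total (|U ω|) (|y|) with h | h
      · rw [max_eq_right h]; linarith
      · rw [max_eq_left h]; linarith
    have h6 : (2 * max |U ω| |y|) ^ p = 2 ^ p * (max |U ω| |y|) ^ p :=
      Real.mul_rpow (by norm_num) (by positivity)
    have h7 : (max |U ω| |y|) ^ p ≤ |U ω| ^ p + |y| ^ p := by
      rcases le_total (|U ω|) (|y|) with h | h
      · rw [max_eq_right h]
        nlinarith [Real.rpow_nonneg (abs_nonneg (U ω)) p]
      · rw [max_eq_left h]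
        nlinarith [Real.rpow_nonneg (abs_nonneg y) p]
    rw [Real.norm_eq_abs, abs_of_nonneg (Real.rpow_nonneg (hnn y ω) p)]
    have h8 : (2:ℝ) ^ p * (max |U ω| |y|) ^ p ≤ 2 ^ p * (|U ω| ^ p + |y| ^ p) := by
      have : (0:ℝ) < 2 ^ p := Real.rpow_pos_of_pos (by norm_num) p
      nlinarith
    calc (max (U ω - y) 0) ^ p ≤ 2 ^ p * (|U ω| ^ p + |y| ^ p) := by
          rw [← h6] at h8; linarith
      _ = 2 ^ p * |U ω| ^ p + 2 ^ p * |y| ^ p := by ring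
  -- the ENNReal-valued functions
  set F : ℝ → Ω → ENNReal := fun y ω => ENNReal.ofReal (max (U ω - y) 0) with hF
  have hFmeas : ∀ y, AEMeasurable (F y) P := fun y => (hm y).ennreal_ofReal
  have hAeq : ∀ y : ℝ, ∫ ω, (max (U ω - y) 0) ^ p ∂P = (∫⁻ ω, (F y ω) ^ p ∂P).toReal := by
    intro y
    rw [MeasureTheory.integral_eq_lintegral_of_nonneg_ae
      (Filter.Eventually.of_forall fun ω => Real.rpow_nonneg (hnn y ω) p)
      ((hm y).pow_const p).aestronglyMeasurable]
    congr 1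
    refine lintegral_congr fun ω => ?_
    rw [hF, ENNReal.ofReal_rpow_of_nonneg (hnn y ω) (le_of_lt hp0)]
  have hAfin : ∀ y : ℝ, (∫⁻ ω, (F y ω) ^ p ∂P) ≠ ⊤ := by
    intro y
    have := (hint y).hasFiniteIntegral
    rw [hasFiniteIntegral_iff_ofReal
      (Filter.Eventually.of_forall fun ω => Real.rpow_nonneg (hnn y ω) p)] at this
    refine ne_of_lt (lt_of_le_of_lt (le_of_eq ?_) this)
    refine lintegral_congr fun ω => ?_
    rw [hF, ENNReal.ofReal_rpow_of_nonneg (hnn y ω) (le_of_lt hp0)]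
  intro y₁ y₂ hy
  simp only
  set K : Ω → ENNReal := fun _ => ENNReal.ofReal (y₂ - y₁) with hK
  -- key ENNReal inequality
  have hptwise : ∀ ω, F y₁ ω ≤ (F y₂ + K) ω := by
    intro ω
    simp only [Pi.add_apply, hF, hK]
    rw [← ENNReal.ofReal_add (hnn y₂ ω) (sub_nonneg.2 hy)]
    refine ENNReal.ofReal_le_ofReal ?_
    refine max_le ?_ (by linarith [hnn y₂ ω])
    have := le_max_left (U ω - y₂) 0; linarith
  have hkey : (∫⁻ ω, (F y₁ ω) ^ p ∂P) ^ (1/p) ≤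
      (∫⁻ ω, (F y₂ ω) ^ p ∂P) ^ (1/p) + ENNReal.ofReal (y₂ - y₁) := by
    have h1 : (∫⁻ ω, (F y₁ ω) ^ p ∂P) ^ (1/p) ≤
        (∫⁻ ω, ((F y₂ + K) ω) ^ p ∂P) ^ (1/p) := by
      refine ENNReal.rpow_le_rpow (lintegral_mono fun ω =>
        ENNReal.rpow_le_rpow (hptwise ω) (le_of_lt hp0)) (by positivity)
    refine le_trans h1 ?_
    have h2 := ENNReal.lintegral_Lp_add_le (μ := P) (f := F y₂) (g := K) (hFmeas y₂)
      aemeasurable_const (le_of_lt hp)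
    refine le_trans h2 ?_
    have h3 : (∫⁻ ω : Ω, (K ω) ^ p ∂P) ^ (1/p)
        = ENNReal.ofReal (y₂ - y₁) := by
      rw [hK, lintegral_const, measure_univ, mul_one, ← ENNReal.rpow_mul,
        mul_one_div_cancel hp0', ENNReal.rpow_one]
    rw [h3]
  -- convert back to real
  have ht : ∀ y, (∫ ω, (max (U ω - y) 0) ^ p ∂P) ^ (1/p)
      = ((∫⁻ ω, (F y ω) ^ p ∂P) ^ (1/p)).toReal := by
    intro y; rw [hAeq y, ENNReal.toReal_rpow]
  have hfin2 : ((∫⁻ ω, (F y₂ ω) ^ p ∂P) ^ (1/p) + ENNReal.ofReal (y₂ - y₁)) ≠ ⊤ := by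
    refine ENNReal.add_ne_top.2 ⟨?_, ENNReal.ofReal_ne_top⟩
    exact ENNReal.rpow_ne_top_of_nonneg (by positivity) (hAfin y₂)
  have hreal : (∫ ω, (max (U ω - y₁) 0) ^ p ∂P) ^ (1/p)
      ≤ (∫ ω, (max (U ω - y₂) 0) ^ p ∂P) ^ (1/p) + (y₂ - y₁) := by
    rw [ht y₁, ht y₂]
    have := ENNReal.toReal_mono hfin2 hkey
    rwa [ENNReal.toReal_add (ENNReal.rpow_ne_top_of_nonneg (by positivity) (hAfin y₂))
      ENNReal.ofReal_ne_top, ENNReal.toReal_ofReal (sub_nonneg.2 hy)] at this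
  obtain ⟨hc0, hc1⟩ := hc
  nlinarith [hreal, sub_nonneg.2 hy]
end

section
/- Let (Ω, 𝔉, P) be a probability space, p > 1 a real number, X ⊆ ℝⁿ a convex set, c > 0, and F : X × Ω → ℝ such that for P-almost every ω the map x ↦ F(x, ω) is convex on X, and E[|F(x, ·)|^p] < ∞ for every x ∈ X. Then the function φ(x, y, z) := (c/z^{p−1})·E[(F(x, ·) − y)₊^p] + y + c·(p − 1)·p^{−p/(p−1)}·z is jointly convex on X × ℝ × (0, ∞). -/
open MeasureTheory

/-- Perspective inequality: joint convexity of `(t,z) ↦ t^p / z^(p-1)` on `[0,∞) × (0,∞)`. -/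
lemma key_perspective {p : ℝ} (hp : 1 < p) {t1 t2 z1 z2 a b : ℝ}
    (ht1 : 0 ≤ t1) (ht2 : 0 ≤ t2) (hz1 : 0 < z1) (hz2 : 0 < z2)
    (ha : 0 ≤ a) (hb : 0 ≤ b) (hab : a + b = 1) :
    (a * t1 + b * t2) ^ p / (a * z1 + b * z2) ^ (p - 1)
      ≤ a * (t1 ^ p / z1 ^ (p - 1)) + b * (t2 ^ p / z2 ^ (p - 1)) := by
  set Z := a * z1 + b * z2 with hZ
  have hZpos : 0 < Z := by
    rcases eq_or_lt_of_le ha with h | h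
    · have hb1 : b = 1 := by linarith
      simpa [hZ, ← h, hb1] using hz2
    · have : 0 < a * z1 := mul_pos h hz1
      have : 0 ≤ b * z2 := mul_nonneg hb hz2.le
      simp only [hZ]; linarith
  have hw1 : 0 ≤ a * z1 / Z := div_nonneg (mul_nonneg ha hz1.le) hZpos.le
  have hw2 : 0 ≤ b * z2 / Z := div_nonneg (mul_nonneg hb hz2.le) hZpos.le
  have hwsum : a * z1 / Z + b * z2 / Z = 1 := by
    field_simp
    exact hZ.symm
  have hu1 : t1 / z1 ∈ Set.Ici (0:ℝ) := div_nonneg ht1 hz1.le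
  have hu2 : t2 / z2 ∈ Set.Ici (0:ℝ) := div_nonneg ht2 hz2.le
  have hconv := (convexOn_rpow hp.le).2 hu1 hu2 hw1 hw2 hwsum
  simp only [smul_eq_mul] at hconv
  have hcomb : a * z1 / Z * (t1 / z1) + b * z2 / Z * (t2 / z2) = (a * t1 + b * t2) / Z := by
    field_simp
  rw [hcomb] at hconv
  have hnum : 0 ≤ a * t1 + b * t2 := by positivity
  have hdiv : ((a * t1 + b * t2) / Z) ^ p = (a * t1 + b * t2) ^ p / Z ^ p :=
    Real.div_rpow hnum hZpos.le p
  rw [hdiv] at hconv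
  have hZp : Z ^ p = Z ^ (p - 1) * Z := by
    rw [← Real.rpow_add_one hZpos.ne' (p - 1)]; ring_nf
  -- multiply hconv by Z
  have hmul := mul_le_mul_of_nonneg_right hconv hZpos.le
  have hL : (a * t1 + b * t2) ^ p / Z ^ p * Z = (a * t1 + b * t2) ^ p / Z ^ (p - 1) := by
    rw [hZp]
    have hZp1 : (0:ℝ) < Z ^ (p - 1) := Real.rpow_pos_of_pos hZpos _
    field_simp
  have hR1 : (t1 / z1) ^ p = t1 ^ p / z1 ^ p := Real.div_rpow ht1 hz1.le p
  have hR2 : (t2 / z2) ^ p = t2 ^ p / z2 ^ p := Real.div_rpow ht2 hz2.le p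
  have hz1p : z1 ^ p = z1 ^ (p - 1) * z1 := by
    rw [← Real.rpow_add_one hz1.ne' (p - 1)]; ring_nf
  have hz2p : z2 ^ p = z2 ^ (p - 1) * z2 := by
    rw [← Real.rpow_add_one hz2.ne' (p - 1)]; ring_nf
  have hz1p1 : (0:ℝ) < z1 ^ (p - 1) := Real.rpow_pos_of_pos hz1 _
  have hz2p1 : (0:ℝ) < z2 ^ (p - 1) := Real.rpow_pos_of_pos hz2 _
  have hR : (a * z1 / Z * (t1 / z1) ^ p + b * z2 / Z * (t2 / z2) ^ p) * Z
      = a * (t1 ^ p / z1 ^ (p - 1)) + b * (t2 ^ p / z2 ^ (p - 1)) := by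
    rw [hR1, hR2, hz1p, hz2p]
    field_simp
  rw [hL, hR] at hmul
  exact hmul

/-- Integrability of the positive-part power. -/
lemma key_integrable {Ω : Type*} [MeasurableSpace Ω] (P : Measure Ω)
    [IsProbabilityMeasure P] {p : ℝ} (hp : 1 < p) {f : Ω → ℝ} (y : ℝ)
    (hm : AEStronglyMeasurable f P) (hi : Integrable (fun ω => |f ω| ^ p) P) :
    Integrable (fun ω => (max (f ω - y) 0) ^ p) P := by
  have hmeas : AEStronglyMeasurable (fun ω => (max (f ω - y) 0) ^ p) P := by
    have h1 : AEStronglyMeasurable (fun ω => max (f ω - y) 0) P :=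
      ((hm.aemeasurable.sub aemeasurable_const).max aemeasurable_const).aestronglyMeasurable
    exact (Real.continuous_rpow_const (by linarith : (0:ℝ) ≤ p)).comp_aestronglyMeasurable h1
  have hbound : Integrable (fun ω => (2:ℝ) ^ p * (|f ω| ^ p + |y| ^ p)) P :=
    ((hi.add (integrable_const (|y| ^ p))).const_mul _)
  refine hbound.mono hmeas (Filter.Eventually.of_forall fun ω => ?_)
  have h0 : (0:ℝ) ≤ max (f ω - y) 0 := le_max_right _ _
  have hppos : (0:ℝ) ≤ p := by linarith
  have h1 : max (f ω - y) 0 ≤ 2 * max |f ω| |y| := by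
    rcases le_total (f ω - y) 0 with h | h
    · simp only [max_eq_right h]
      positivity
    · rw [max_eq_left h]
      have : f ω - y ≤ |f ω| + |y| := by
        have := abs_nonneg (f ω); have := abs_nonneg y
        have h1 := le_abs_self (f ω); have h2 := neg_abs_le y
        linarith
      have h3 : |f ω| ≤ max |f ω| |y| := le_max_left _ _
      have h4 : |y| ≤ max |f ω| |y| := le_max_right _ _
      linarith
  have h2 : (max (f ω - y) 0) ^ p ≤ (2 * max |f ω| |y|) ^ p :=
    Real.rpow_le_rpow h0 h1 hppos
  have h3 : (2 * max |f ω| |y|) ^ p = 2 ^ p * (max |f ω| |y|) ^ p :=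
    Real.mul_rpow (by norm_num) (le_max_of_le_left (abs_nonneg _))
  have h4 : (max |f ω| |y|) ^ p ≤ |f ω| ^ p + |y| ^ p := by
    rcases max_cases |f ω| |y| with ⟨heq, _⟩ | ⟨heq, _⟩ <;> rw [heq]
    · have : (0:ℝ) ≤ |y| ^ p := Real.rpow_nonneg (abs_nonneg _) _
      linarith
    · have : (0:ℝ) ≤ |f ω| ^ p := Real.rpow_nonneg (abs_nonneg _) _
      linarith
  have h5 : (0:ℝ) ≤ (max (f ω - y) 0) ^ p := Real.rpow_nonneg h0 _
  have h6 : (2:ℝ) ^ p * (max |f ω| |y|) ^ p ≤ 2 ^ p * (|f ω| ^ p + |y| ^ p) := by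
    have : (0:ℝ) ≤ (2:ℝ) ^ p := Real.rpow_nonneg (by norm_num) _
    exact mul_le_mul_of_nonneg_left h4 this
  rw [Real.norm_eq_abs, Real.norm_eq_abs, abs_of_nonneg h5]
  have h7 : (0:ℝ) ≤ (2:ℝ) ^ p * (|f ω| ^ p + |y| ^ p) := by
    have := Real.rpow_nonneg (abs_nonneg (f ω)) p
    have := Real.rpow_nonneg (abs_nonneg y) p
    positivity
  rw [abs_of_nonneg h7]
  calc (max (f ω - y) 0) ^ p ≤ 2 ^ p * (max |f ω| |y|) ^ p := by rw [← h3]; exact h2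
    _ ≤ 2 ^ p * (|f ω| ^ p + |y| ^ p) := h6

/-- Joint convexity of the order-`p` lifted objective
`φ(x, y, z) = (c/z^{p−1})·E[(F(x,·) − y)₊^p] + y + c(p−1)p^{−p/(p−1)}·z`
on `X × ℝ × (0, ∞)`. -/
theorem stmt_18 {n : ℕ} {Ω : Type*} [MeasurableSpace Ω] (P : Measure Ω)
    [IsProbabilityMeasure P]
    (p : ℝ) (hp : 1 < p)
    (X : Set (Fin n → ℝ)) (hX : Convex ℝ X) (c : ℝ) (hc : 0 < c)
    (F : (Fin n → ℝ) → Ω → ℝ)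
    (hconv : ∀ᵐ ω ∂P, ConvexOn ℝ X (fun x => F x ω))
    (hmeas : ∀ x ∈ X, AEStronglyMeasurable (F x) P)
    (hLp : ∀ x ∈ X, Integrable (fun ω => |F x ω| ^ p) P) :
    ConvexOn ℝ (X ×ˢ (Set.univ : Set ℝ) ×ˢ Set.Ioi (0 : ℝ))
      (fun q : (Fin n → ℝ) × ℝ × ℝ =>
        (c / q.2.2 ^ (p - 1)) * (∫ ω, (max (F q.1 ω - q.2.1) 0) ^ p ∂P) + q.2.1
          + c * (p - 1) * p ^ (-(p / (p - 1))) * q.2.2) := by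
  constructor
  · exact hX.prod (convex_univ.prod (convex_Ioi 0))
  rintro ⟨x1, y1, z1⟩ ⟨hx1, -, hz1⟩ ⟨x2, y2, z2⟩ ⟨hx2, -, hz2⟩ a b ha hb hab
  simp only [Set.mem_Ioi] at hz1 hz2
  simp only [Prod.smul_mk, Prod.mk_add_mk, smul_eq_mul]
  set xm := a • x1 + b • x2 with hxm
  have hxmX : xm ∈ X := hX hx1 hx2 ha hb hab
  set ym := a * y1 + b * y2
  set zm := a * z1 + b * z2 with hzm
  have hzmpos : 0 < zm := by
    rcases eq_or_lt_of_le ha with h | h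
    · have hb1 : b = 1 := by linarith
      simpa [hzm, ← h, hb1] using hz2
    · have h1 : 0 < a * z1 := mul_pos h hz1
      have h2 : 0 ≤ b * z2 := mul_nonneg hb hz2.le
      simp only [hzm]; linarith
  -- integrability of the three integrands (divided by z^(p-1))
  have hint : ∀ x ∈ X, ∀ y z : ℝ,
      Integrable (fun ω => (max (F x ω - y) 0) ^ p / z ^ (p - 1)) P := by
    intro x hx y z
    exact (key_integrable P hp y (hmeas x hx) (hLp x hx)).div_const _
  -- key a.e. pointwise inequality
  have hae : ∀ᵐ ω ∂P,
      (max (F xm ω - ym) 0) ^ p / zm ^ (p - 1)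
        ≤ a * ((max (F x1 ω - y1) 0) ^ p / z1 ^ (p - 1))
          + b * ((max (F x2 ω - y2) 0) ^ p / z2 ^ (p - 1)) := by
    filter_upwards [hconv] with ω hω
    set t1 := max (F x1 ω - y1) 0
    set t2 := max (F x2 ω - y2) 0
    have ht1 : 0 ≤ t1 := le_max_right _ _
    have ht2 : 0 ≤ t2 := le_max_right _ _
    have htm : max (F xm ω - ym) 0 ≤ a * t1 + b * t2 := by
      have hFm : F xm ω ≤ a * F x1 ω + b * F x2 ω := by
        simpa using hω.2 hx1 hx2 ha hb hab
      have h1 : F x1 ω - y1 ≤ t1 := le_max_left _ _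
      have h2 : F x2 ω - y2 ≤ t2 := le_max_left _ _
      have : F xm ω - ym ≤ a * t1 + b * t2 := by
        have e1 := mul_le_mul_of_nonneg_left h1 ha
        have e2 := mul_le_mul_of_nonneg_left h2 hb
        simp only [ym]
        nlinarith
      exact max_le this (by positivity)
    have hmono : (max (F xm ω - ym) 0) ^ p ≤ (a * t1 + b * t2) ^ p :=
      Real.rpow_le_rpow (le_max_right _ _) htm (by linarith)
    have hzmp : (0:ℝ) < zm ^ (p - 1) := Real.rpow_pos_of_pos hzmpos _
    calc (max (F xm ω - ym) 0) ^ p / zm ^ (p - 1)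
        ≤ (a * t1 + b * t2) ^ p / zm ^ (p - 1) := by gcongr
      _ ≤ a * (t1 ^ p / z1 ^ (p - 1)) + b * (t2 ^ p / z2 ^ (p - 1)) :=
          key_perspective hp ht1 ht2 hz1 hz2 ha hb hab
  -- integrate
  have hintm := hint xm hxmX ym zm
  have hint1 := hint x1 hx1 y1 z1
  have hint2 := hint x2 hx2 y2 z2
  have hIneq : ∫ ω, (max (F xm ω - ym) 0) ^ p / zm ^ (p - 1) ∂P
      ≤ a * ∫ ω, (max (F x1 ω - y1) 0) ^ p / z1 ^ (p - 1) ∂P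
        + b * ∫ ω, (max (F x2 ω - y2) 0) ^ p / z2 ^ (p - 1) ∂P := by
    have h1 := integral_mono_ae hintm ((hint1.const_mul a).add (hint2.const_mul b)) hae
    have h2 : ∫ ω, (a * ((max (F x1 ω - y1) 0) ^ p / z1 ^ (p - 1))
        + b * ((max (F x2 ω - y2) 0) ^ p / z2 ^ (p - 1))) ∂P
        = a * ∫ ω, (max (F x1 ω - y1) 0) ^ p / z1 ^ (p - 1) ∂P
          + b * ∫ ω, (max (F x2 ω - y2) 0) ^ p / z2 ^ (p - 1) ∂P := by
      rw [integral_add (hint1.const_mul a) (hint2.const_mul b), integral_const_mul,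
        integral_const_mul]
    exact h1.trans_eq h2
  -- rewrite (c / z^(p-1)) * ∫ f = c * ∫ f / z^(p-1)
  have hrw : ∀ x ∈ X, ∀ y : ℝ, ∀ z : ℝ,
      (c / z ^ (p - 1)) * (∫ ω, (max (F x ω - y) 0) ^ p ∂P)
        = c * ∫ ω, (max (F x ω - y) 0) ^ p / z ^ (p - 1) ∂P := by
    intro x hx y z
    rw [integral_div]
    ring
  have e1 := hrw x1 hx1 y1 z1
  have e2 := hrw x2 hx2 y2 z2
  have em := hrw xm hxmX ym zm
  rw [em, e1, e2]
  have hmain : c * ∫ ω, (max (F xm ω - ym) 0) ^ p / zm ^ (p - 1) ∂P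
      ≤ a * (c * ∫ ω, (max (F x1 ω - y1) 0) ^ p / z1 ^ (p - 1) ∂P)
        + b * (c * ∫ ω, (max (F x2 ω - y2) 0) ^ p / z2 ^ (p - 1) ∂P) := by
    nlinarith [mul_le_mul_of_nonneg_left hIneq hc.le]
  have hlin : ym + c * (p - 1) * p ^ (-(p / (p - 1))) * zm
      = a * (y1 + c * (p - 1) * p ^ (-(p / (p - 1))) * z1)
        + b * (y2 + c * (p - 1) * p ^ (-(p / (p - 1))) * z2) := by
    simp only [ym, hzm]; ring
  linarith
end

section
/- Let (Ω, 𝔉, P) be a probability space, p > 1 a real number, X a nonempty set, c ∈ (0, 1], and for each x ∈ X let F(x) : Ω → ℝ be a random variable with E[|F(x)|^p] < ∞. Define f(x) := E[F(x)], h(x) := f(x) + c·(E[(F(x) − f(x))₊^p])^{1/p}, and φ(x, y, z) := (c/z^{p−1})·E[(F(x) − y)₊^p] + y + c·(p − 1)·p^{−p/(p−1)}·z. Fix ε > 0 and the feasible set S_ε := {(x, y, z) : x ∈ X, y ≥ f(x), z ≥ ε}. Suppose x* minimizes h over X and (x*_ε, y*_ε, z*_ε) minimizes φ over S_ε. Then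 h(x*_ε) − h(x*) ≤ c·p^{−1/(p−1)}·ε. -/
open MeasureTheory

/-- Weighted AM–GM lower bound: the lifted objective in `z` dominates `c·M^{1/p}`. -/
private lemma amgm_aux {p c M z : ℝ} (hp : 1 < p) (hc : 0 < c) (hM : 0 ≤ M) (hz : 0 < z) :
    c * M ^ (1/p) ≤ c / z ^ (p-1) * M + c * (p-1) * p ^ (-(p/(p-1))) * z := by
  have hp0 : (0:ℝ) < p := by linarith
  have hp1 : (0:ℝ) < p - 1 := by linarith
  have hzp : (0:ℝ) < z ^ (1-p) := Real.rpow_pos_of_pos hz _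
  have hzp' : (0:ℝ) < z ^ (p-1) := Real.rpow_pos_of_pos hz _
  have hpp : (0:ℝ) < p ^ (-(1/(p-1))) := Real.rpow_pos_of_pos hp0 _
  have hppp : (0:ℝ) < p ^ (-(p/(p-1))) := Real.rpow_pos_of_pos hp0 _
  have key := Real.geom_mean_le_arith_mean2_weighted
    (w₁ := 1/p) (w₂ := (p-1)/p)
    (p₁ := (p*c) * z^(1-p) * M) (p₂ := (c * p^(-(1/(p-1)))) * z)
    (by positivity) (by positivity) (by positivity) (by positivity)
    (by field_simp; ring)
  have lhs_eq : ((p*c) * z^(1-p) * M) ^ (1/p) * ((c * p^(-(1/(p-1)))) * z) ^ ((p-1)/p)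
      = c * M ^ (1/p) := by
    rw [Real.mul_rpow (by positivity) hM,
        Real.mul_rpow (by positivity) hzp.le,
        Real.mul_rpow hp0.le hc.le,
        Real.mul_rpow (by positivity) hz.le,
        Real.mul_rpow hc.le hpp.le,
        ← Real.rpow_mul hz.le, ← Real.rpow_mul hp0.le]
    have ec : c ^ (1/p) * c ^ ((p-1)/p) = c := by
      rw [← Real.rpow_add hc, show (1/p) + ((p-1)/p) = 1 by field_simp; ring, Real.rpow_one]
    have ep : p ^ (1/p) * p ^ (-(1/(p-1)) * ((p-1)/p)) = 1 := by
      rw [← Real.rpow_add hp0, show (1/p) + (-(1/(p-1)) * ((p-1)/p)) = 0 by field_simp; ring,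
        Real.rpow_zero]
    have ez : z ^ ((1-p)*(1/p)) * z ^ ((p-1)/p) = 1 := by
      rw [← Real.rpow_add hz, show ((1-p)*(1/p)) + ((p-1)/p) = 0 by field_simp; ring,
        Real.rpow_zero]
    calc p ^ (1/p) * c ^ (1/p) * z ^ ((1-p)*(1/p)) * M ^ (1/p) *
          (c ^ ((p-1)/p) * p ^ (-(1/(p-1)) * ((p-1)/p)) * z ^ ((p-1)/p))
        = (c ^ (1/p) * c ^ ((p-1)/p)) * (p ^ (1/p) * p ^ (-(1/(p-1)) * ((p-1)/p)))
            * (z ^ ((1-p)*(1/p)) * z ^ ((p-1)/p)) * M ^ (1/p) := by ring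
      _ = c * M ^ (1/p) := by rw [ec, ep, ez]; ring
  have rhs_eq : (1/p) * ((p*c) * z^(1-p) * M) + ((p-1)/p) * ((c * p^(-(1/(p-1)))) * z)
      = c / z ^ (p-1) * M + c * (p-1) * p ^ (-(p/(p-1))) * z := by
    have e1 : z ^ (1-p) = (z ^ (p-1))⁻¹ := by
      rw [show (1:ℝ)-p = -(p-1) by ring, Real.rpow_neg hz.le]
    have e2 : p ^ (-(p/(p-1))) = p ^ (-(1/(p-1))) * p⁻¹ := by
      rw [← Real.rpow_neg_one p, ← Real.rpow_add hp0]
      congr 1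
      field_simp
      ring
    rw [e1, e2]
    field_simp
  rw [lhs_eq, rhs_eq] at key
  exact key

/-- Near-optimal feasible `z`: a `z ≥ ε` whose objective value is within
`c·p^{-1/(p-1)}·ε` of the unconstrained infimum `c·M^{1/p}`. -/
private lemma exists_good_z {p c M ε : ℝ} (hp : 1 < p) (hc : 0 < c) (hM : 0 ≤ M) (hε : 0 < ε) :
    ∃ z, ε ≤ z ∧
      c / z ^ (p-1) * M + c * (p-1) * p ^ (-(p/(p-1))) * z
        ≤ c * M ^ (1/p) + c * p ^ (-(1/(p-1))) * ε := by
  have hp0 : (0:ℝ) < p := by linarith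
  have hp1 : (0:ℝ) < p - 1 := by linarith
  have hq : (0:ℝ) < p ^ (1/(p-1)) := Real.rpow_pos_of_pos hp0 _
  have hq' : (0:ℝ) < p ^ (-(1/(p-1))) := Real.rpow_pos_of_pos hp0 _
  have hppp : (0:ℝ) < p ^ (-(p/(p-1))) := Real.rpow_pos_of_pos hp0 _
  set N : ℝ := M ^ (1/p) with hN_def
  have hN : 0 ≤ N := Real.rpow_nonneg hM _
  have hMN : N ^ p = M := by
    rw [hN_def, ← Real.rpow_mul hM, one_div, inv_mul_cancel₀ hp0.ne', Real.rpow_one]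
  by_cases hcase : ε ≤ N * p ^ (1/(p-1))
  · refine ⟨N * p ^ (1/(p-1)), hcase, ?_⟩
    have hNpos : 0 < N := by nlinarith
    have hz : 0 < N * p ^ (1/(p-1)) := by positivity
    have ezp : (N * p ^ (1/(p-1))) ^ (p-1) = N ^ (p-1) * p := by
      rw [Real.mul_rpow hN hq.le, ← Real.rpow_mul hp0.le,
        show (1/(p-1)) * (p-1) = 1 by field_simp, Real.rpow_one]
    have eNp : N ^ p = N * N ^ (p-1) := by
      have h := Real.rpow_add hNpos 1 (p-1)
      rw [show (1:ℝ) + (p-1) = p by ring, Real.rpow_one] at h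
      exact h
    have hNp1 : (0:ℝ) < N ^ (p-1) := Real.rpow_pos_of_pos hNpos _
    have eA : c / (N * p ^ (1/(p-1))) ^ (p-1) * M = c * N / p := by
      rw [ezp, ← hMN, eNp]
      field_simp
    have eB : c * (p-1) * p ^ (-(p/(p-1))) * (N * p ^ (1/(p-1))) = c * (p-1) * N / p := by
      have e : p ^ (-(p/(p-1))) * p ^ (1/(p-1)) = p⁻¹ := by
        rw [← Real.rpow_add hp0, show -(p/(p-1)) + 1/(p-1) = -1 by field_simp; ring,
          Real.rpow_neg_one]
      calc c * (p-1) * p ^ (-(p/(p-1))) * (N * p ^ (1/(p-1)))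
          = c * (p-1) * N * (p ^ (-(p/(p-1))) * p ^ (1/(p-1))) := by ring
        _ = c * (p-1) * N / p := by rw [e]; ring
    rw [eA, eB]
    have hterm : 0 ≤ c * p ^ (-(1/(p-1))) * ε := by positivity
    have : c * N / p + c * (p-1) * N / p = c * N := by field_simp; ring
    linarith
  · push_neg at hcase
    refine ⟨ε, le_rfl, ?_⟩
    have hεp1 : (0:ℝ) < ε ^ (p-1) := Real.rpow_pos_of_pos hε _
    have hNlt : N < ε * p ^ (-(1/(p-1))) := by
      have h1 := mul_lt_mul_of_pos_right hcase hq'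
      have h2 : N * p ^ (1/(p-1)) * p ^ (-(1/(p-1))) = N := by
        rw [mul_assoc, ← Real.rpow_add hp0]
        simp
      rwa [h2] at h1
    have hMle : M ≤ (ε * p ^ (-(1/(p-1)))) ^ p := by
      rw [← hMN]
      exact Real.rpow_le_rpow hN hNlt.le hp0.le
    have epow : (ε * p ^ (-(1/(p-1)))) ^ p = ε ^ p * p ^ (-(p/(p-1))) := by
      rw [Real.mul_rpow hε.le hq'.le, ← Real.rpow_mul hp0.le]
      congr 2
      ring
    have eεp : ε ^ p = ε * ε ^ (p-1) := by
      have h := Real.rpow_add hε 1 (p-1)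
      rw [show (1:ℝ) + (p-1) = p by ring, Real.rpow_one] at h
      exact h
    have eA : c / ε ^ (p-1) * M ≤ c * ε * p ^ (-(p/(p-1))) := by
      have h1 : c / ε ^ (p-1) * M ≤ c / ε ^ (p-1) * (ε ^ p * p ^ (-(p/(p-1)))) := by
        rw [← epow]
        exact mul_le_mul_of_nonneg_left hMle (by positivity)
      have h2 : c / ε ^ (p-1) * (ε ^ p * p ^ (-(p/(p-1)))) = c * ε * p ^ (-(p/(p-1))) := by
        rw [eεp]; field_simp
      linarith
    have etot : c * ε * p ^ (-(p/(p-1))) + c * (p-1) * p ^ (-(p/(p-1))) * ε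
        = c * p ^ (-(1/(p-1))) * ε := by
      have e : p * p ^ (-(p/(p-1))) = p ^ (-(1/(p-1))) := by
        nth_rewrite 1 [← Real.rpow_one p]
        rw [← Real.rpow_add hp0]
        congr 1
        field_simp
        ring
      calc c * ε * p ^ (-(p/(p-1))) + c * (p-1) * p ^ (-(p/(p-1))) * ε
          = c * ε * (p * p ^ (-(p/(p-1)))) := by ring
        _ = c * p ^ (-(1/(p-1))) * ε := by rw [e]; ring
    have hNnn : 0 ≤ c * M ^ (1/p) := by positivity
    linarith

private lemma memLp_pos_part {Ω : Type*} [MeasurableSpace Ω] (P : Measure Ω)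
    [IsProbabilityMeasure P] {p : ℝ} (hp : 1 < p) {F : Ω → ℝ}
    (hFm : AEStronglyMeasurable F P) (hFp : Integrable (fun ω => |F ω| ^ p) P) (y : ℝ) :
    MemLp (fun ω => max (F ω - y) 0) (ENNReal.ofReal p) P := by
  have hp0 : (0:ℝ) < p := by linarith
  have hq0 : ENNReal.ofReal p ≠ 0 := (ENNReal.ofReal_pos.2 hp0).ne'
  have hqt : ENNReal.ofReal p ≠ ⊤ := ENNReal.ofReal_ne_top
  have hqr : (ENNReal.ofReal p).toReal = p := ENNReal.toReal_ofReal hp0.le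
  have h1 : MemLp F (ENNReal.ofReal p) P := by
    rw [← memLp_norm_rpow_iff hFm hq0 hqt, ENNReal.div_self hq0 hqt,
      memLp_one_iff_integrable]
    simpa [hqr, Real.norm_eq_abs] using hFp
  have h2 : MemLp (fun ω => F ω - y) (ENNReal.ofReal p) P := h1.sub (memLp_const y)
  refine h2.of_le ?_ ?_
  · have h3 : AEStronglyMeasurable (fun ω => F ω - y) P := hFm.sub aestronglyMeasurable_const
    have h4 := h3.sup (aestronglyMeasurable_const (b := (0:ℝ)))
    exact h4
  · filter_upwards with ω
    rw [Real.norm_eq_abs, Real.norm_eq_abs, abs_of_nonneg (le_max_right _ _)]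
    exact max_le (le_abs_self _) (abs_nonneg _)

/-- Minkowski-type monotonicity in the shift `y`. -/
private lemma mink {Ω : Type*} [MeasurableSpace Ω] (P : Measure Ω) [IsProbabilityMeasure P]
    {p : ℝ} (hp : 1 < p) {F : Ω → ℝ} (hFm : AEStronglyMeasurable F P)
    (hFp : Integrable (fun ω => |F ω| ^ p) P) {y y' : ℝ} (hyy' : y ≤ y') :
    (∫ ω, (max (F ω - y) 0) ^ p ∂P) ^ (1/p)
      ≤ (∫ ω, (max (F ω - y') 0) ^ p ∂P) ^ (1/p) + (y' - y) := by
  have hp0 : (0:ℝ) < p := by linarith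
  have hq0 : ENNReal.ofReal p ≠ 0 := (ENNReal.ofReal_pos.2 hp0).ne'
  have hqt : ENNReal.ofReal p ≠ ⊤ := ENNReal.ofReal_ne_top
  have hqr : (ENNReal.ofReal p).toReal = p := ENNReal.toReal_ofReal hp0.le
  have hmem := memLp_pos_part P hp hFm hFp
  have hd : 0 ≤ y' - y := sub_nonneg.2 hyy'
  have norm_eq : ∀ z : ℝ, eLpNorm (fun ω => max (F ω - z) 0) (ENNReal.ofReal p) P
      = ENNReal.ofReal ((∫ ω, (max (F ω - z) 0) ^ p ∂P) ^ (1/p)) := by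
    intro z
    rw [(hmem z).eLpNorm_eq_integral_rpow_norm hq0 hqt]
    congr 1
    rw [hqr, one_div]
    congr 1
    refine integral_congr_ae (Filter.Eventually.of_forall fun ω => ?_)
    show ‖max (F ω - z) 0‖ ^ p = (max (F ω - z) 0) ^ p
    rw [Real.norm_eq_abs, abs_of_nonneg (le_max_right _ _)]
  have key : eLpNorm (fun ω => max (F ω - y) 0) (ENNReal.ofReal p) P
      ≤ eLpNorm (fun ω => max (F ω - y') 0) (ENNReal.ofReal p) P + ENNReal.ofReal (y' - y) := by
    calc eLpNorm (fun ω => max (F ω - y) 0) (ENNReal.ofReal p) P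
        ≤ eLpNorm ((fun ω => max (F ω - y') 0) + (fun _ => y' - y)) (ENNReal.ofReal p) P := by
          refine eLpNorm_mono_real fun ω => ?_
          rw [Real.norm_eq_abs, abs_of_nonneg (le_max_right _ _), Pi.add_apply]
          refine max_le ?_ ?_
          · have := le_max_left (F ω - y') (0:ℝ)
            linarith
          · have := le_max_right (F ω - y') (0:ℝ)
            linarith
      _ ≤ eLpNorm (fun ω => max (F ω - y') 0) (ENNReal.ofReal p) P
            + eLpNorm (fun _ : Ω => y' - y) (ENNReal.ofReal p) P :=
          eLpNorm_add_le (hmem y').aestronglyMeasurable aestronglyMeasurable_const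
            (ENNReal.one_le_ofReal.2 hp.le)
      _ = eLpNorm (fun ω => max (F ω - y') 0) (ENNReal.ofReal p) P + ENNReal.ofReal (y' - y) := by
          rw [eLpNorm_const _ hq0 (IsProbabilityMeasure.ne_zero P), measure_univ,
            ENNReal.one_rpow, mul_one, Real.enorm_eq_ofReal hd]
  have hB : 0 ≤ (∫ ω, (max (F ω - y') 0) ^ p ∂P) ^ (1/p) :=
    Real.rpow_nonneg (integral_nonneg fun ω => Real.rpow_nonneg (le_max_right _ _) _) _
  rw [norm_eq, norm_eq, ← ENNReal.ofReal_add hB hd] at key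
  exact (ENNReal.ofReal_le_ofReal_iff (by linarith)).1 key

/-- Approximate optimality of the truncated order-`p` lifted problem: if `x*` minimizes
`h(x) = f(x) + c·(E[(F(x) − f(x))₊^p])^{1/p}` over `X` and `(x*_ε, y*_ε, z*_ε)` minimizes
`φ(x, y, z) = (c/z^{p−1})·E[(F(x) − y)₊^p] + y + c(p−1)p^{−p/(p−1)}·z` over
`S_ε = {(x, y, z) : y ≥ f(x), z ≥ ε}`, then `h(x*_ε) − h(x*) ≤ c·p^{−1/(p−1)}·ε`. -/
theorem stmt_19 {Ω X : Type*} [MeasurableSpace Ω] [Nonempty X]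
    (P : Measure Ω) [IsProbabilityMeasure P]
    (p : ℝ) (hp : 1 < p) (c : ℝ) (hc : c ∈ Set.Ioc (0 : ℝ) 1)
    (F : X → Ω → ℝ) (hFm : ∀ x, AEStronglyMeasurable (F x) P)
    (hFp : ∀ x, Integrable (fun ω => |F x ω| ^ p) P)
    (f h : X → ℝ) (φ : X → ℝ → ℝ → ℝ)
    (hf : ∀ x, f x = ∫ ω, F x ω ∂P)
    (hh : ∀ x, h x = f x + c * (∫ ω, (max (F x ω - f x) 0) ^ p ∂P) ^ (1 / p))
    (hφ : ∀ x y z, φ x y z = (c / z ^ (p - 1)) * (∫ ω, (max (F x ω - y) 0) ^ p ∂P)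
      + y + c * (p - 1) * p ^ (-(p / (p - 1))) * z)
    (ε : ℝ) (hε : 0 < ε)
    (xs : X) (hxs : ∀ x, h xs ≤ h x)
    (xe : X) (ye ze : ℝ) (hye : f xe ≤ ye) (hze : ε ≤ ze)
    (hmin : ∀ x y z, f x ≤ y → ε ≤ z → φ xe ye ze ≤ φ x y z) :
    h xe - h xs ≤ c * p ^ (-(1 / (p - 1))) * ε := by
  obtain ⟨hc0, hc1⟩ := hc
  have hp0 : (0:ℝ) < p := by linarith
  have hze0 : (0:ℝ) < ze := lt_of_lt_of_le hε hze
  have hMye : 0 ≤ ∫ ω, (max (F xe ω - ye) 0) ^ p ∂P :=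
    integral_nonneg fun ω => Real.rpow_nonneg (le_max_right _ _) _
  have hMs : 0 ≤ ∫ ω, (max (F xs ω - f xs) 0) ^ p ∂P :=
    integral_nonneg fun ω => Real.rpow_nonneg (le_max_right _ _) _
  -- Step 1: monotonicity in y
  have step1 : h xe ≤ ye + c * (∫ ω, (max (F xe ω - ye) 0) ^ p ∂P) ^ (1/p) := by
    have hm := mink P hp (hFm xe) (hFp xe) hye
    have := mul_le_mul_of_nonneg_left hm hc0.le
    rw [hh]
    nlinarith
  -- Step 2: AM-GM in z
  have step2 : ye + c * (∫ ω, (max (F xe ω - ye) 0) ^ p ∂P) ^ (1/p) ≤ φ xe ye ze := by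
    rw [hφ]
    have := amgm_aux hp hc0 hMye hze0
    linarith
  -- Step 3: near-optimal feasible z for (xs, f xs)
  obtain ⟨z, hz1, hz2⟩ := exists_good_z (M := ∫ ω, (max (F xs ω - f xs) 0) ^ p ∂P)
    hp hc0 hMs hε
  have step3 : φ xe ye ze ≤ h xs + c * p ^ (-(1/(p-1))) * ε := by
    have := hmin xs (f xs) z le_rfl hz1
    rw [hφ xs (f xs) z] at this
    rw [hh]
    linarith
  linarith
end
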